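/- arXiv:2512.11370 — 9 statements merged into one kernel-verified Lean document; each statement's English description precedes it below -/
import Mathlib

section
/- Let ε > 0 and let y : [0,∞) → ℝ^N be locally absolutely continuous with ∫₀^∞ e^{-t/ε} |y'(t)|² dt < ∞. Then (1/2) ∫₀^∞ e^{-t/ε} |y(t)|² dt ≤ ε |y(0)|² + 2ε² ∫₀^∞ e^{-t/ε} |y'(t)|² dt. -/
open MeasureTheory Real Set

lemma swap_tri (f h : ℝ → ENNReal) (hf : Measurable f) (hh : Measurable h) (T : ℝ) :
    ∫⁻ t in Set.Ioc 0 T, h t * ∫⁻ u in Set.Ioc 0 t, f u =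
      ∫⁻ u in Set.Ioc 0 T, f u * ∫⁻ t in Set.Icc u T, h t := by
  set S : Set (ℝ × ℝ) := {p : ℝ × ℝ | 0 < p.2 ∧ p.2 ≤ p.1 ∧ p.1 ≤ T} with hSdef
  have hS : MeasurableSet S := by
    apply MeasurableSet.inter (measurableSet_lt measurable_const measurable_snd)
    exact MeasurableSet.inter (measurableSet_le measurable_snd measurable_fst)
      (measurableSet_le measurable_fst measurable_const)
  set F : ℝ → ℝ → ENNReal := fun t u => S.indicator (fun p => h p.1 * f p.2) (t, u) with hFdef
  have hFm : Measurable (Function.uncurry F) := by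
    have : Function.uncurry F = S.indicator (fun p => h p.1 * f p.2) := by
      funext p; simp [Function.uncurry, hFdef]
    rw [this]
    exact ((hh.comp measurable_fst).mul (hf.comp measurable_snd)).indicator hS
  have key := lintegral_lintegral_swap (μ := volume) (ν := volume) hFm.aemeasurable
  have h1 : ∀ t, ∫⁻ u, F t u =
      (Set.Ioc 0 T).indicator (fun t => h t * ∫⁻ u in Set.Ioc 0 t, f u) t := by
    intro t
    by_cases ht : t ∈ Set.Ioc 0 T
    · rw [Set.indicator_of_mem ht]
      have heq : ∀ u, F t u = (Set.Ioc 0 t).indicator (fun u => h t * f u) u := by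
        intro u
        simp only [hFdef, hSdef, Set.indicator_apply, Set.mem_setOf_eq, Set.mem_Ioc, ht.2,
          and_true]
      simp_rw [heq]
      rw [lintegral_indicator measurableSet_Ioc, lintegral_const_mul _ hf]
    · rw [Set.indicator_of_notMem ht]
      have heq : ∀ u, F t u = 0 := by
        intro u
        apply Set.indicator_of_notMem
        simp only [hSdef, Set.mem_setOf_eq]
        rintro ⟨hu0, hut, htT⟩
        exact ht ⟨lt_of_lt_of_le hu0 hut, htT⟩
      simp [heq]
  have h2 : ∀ u, ∫⁻ t, F t u =
      (Set.Ioc 0 T).indicator (fun u => f u * ∫⁻ t in Set.Icc u T, h t) u := by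
    intro u
    by_cases hu : u ∈ Set.Ioc 0 T
    · rw [Set.indicator_of_mem hu]
      have heq : ∀ t, F t u = (Set.Icc u T).indicator (fun t => h t * f u) t := by
        intro t
        simp only [hFdef, hSdef, Set.indicator_apply, Set.mem_setOf_eq, Set.mem_Icc, hu.1,
          true_and]
      simp_rw [heq]
      rw [lintegral_indicator measurableSet_Icc, lintegral_mul_const _ hh, mul_comm]
    · rw [Set.indicator_of_notMem hu]
      have heq : ∀ t, F t u = 0 := by
        intro t
        apply Set.indicator_of_notMem
        simp only [hSdef, Set.mem_setOf_eq]
        rintro ⟨hu0, hut, htT⟩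
        exact hu ⟨hu0, hut.trans htT⟩
      simp [heq]
  calc ∫⁻ t in Set.Ioc 0 T, h t * ∫⁻ u in Set.Ioc 0 t, f u
      = ∫⁻ t, (Set.Ioc 0 T).indicator (fun t => h t * ∫⁻ u in Set.Ioc 0 t, f u) t := by
        rw [lintegral_indicator measurableSet_Ioc]
    _ = ∫⁻ t, ∫⁻ u, F t u := by simp_rw [h1]
    _ = ∫⁻ u, ∫⁻ t, F t u := key
    _ = ∫⁻ u, (Set.Ioc 0 T).indicator (fun u => f u * ∫⁻ t in Set.Icc u T, h t) u := by
        simp_rw [h2]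
    _ = ∫⁻ u in Set.Ioc 0 T, f u * ∫⁻ t in Set.Icc u T, h t := by
        rw [lintegral_indicator measurableSet_Ioc]

lemma tail_exp {ε : ℝ} (hε : 0 < ε) (u : ℝ) :
    ∫⁻ t in Set.Ici u, ENNReal.ofReal (Real.exp (-t / ε)) =
      ENNReal.ofReal (ε * Real.exp (-u / ε)) := by
  have hrw : (fun t : ℝ => Real.exp (-t / ε)) = fun t => Real.exp (-(ε⁻¹ * t)) := by
    funext t; congr 1; ring
  have hInt : IntegrableOn (fun t : ℝ => Real.exp (-t / ε)) (Set.Ioi u) := by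
    rw [hrw]
    simpa using exp_neg_integrableOn_Ioi u (by positivity : (0:ℝ) < ε⁻¹)
  have hres : volume.restrict (Set.Ici u) = volume.restrict (Set.Ioi u) :=
    (Measure.restrict_congr_set Ioi_ae_eq_Ici).symm
  rw [hres, ← ofReal_integral_eq_lintegral_ofReal hInt
    (Filter.Eventually.of_forall fun t => (Real.exp_pos _).le)]
  congr 1
  have hcomp := integral_comp_mul_left_Ioi (fun x => Real.exp (-x)) u
    (by positivity : (0:ℝ) < ε⁻¹)
  rw [hrw]
  rw [hcomp, integral_exp_neg_Ioi, smul_eq_mul, inv_inv]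
  congr 1
  ring

/-- Weighted energy estimate for functions in the weighted Sobolev space `W_ε`:
if `y` is locally absolutely continuous on `[0,∞)` (expressed by the fundamental
theorem of calculus with a locally integrable derivative `y'`) and the derivative
is square integrable against the weight `e^{-t/ε}`, then
`(1/2)∫₀^∞ e^{-t/ε}|y|² ≤ ε|y(0)|² + 2ε²∫₀^∞ e^{-t/ε}|y'|²`. -/
theorem stmt0 (N : ℕ) (ε : ℝ) (hε : 0 < ε)
    (y y' : ℝ → EuclideanSpace ℝ (Fin N))
    (hint : ∀ t ∈ Set.Ici (0 : ℝ), IntervalIntegrable y' volume 0 t)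
    (hy : ∀ t ∈ Set.Ici (0 : ℝ), y t = y 0 + ∫ s in (0 : ℝ)..t, y' s)
    (hL2 : IntegrableOn (fun t => Real.exp (-t / ε) * ‖y' t‖ ^ 2) (Set.Ioi (0 : ℝ)) volume) :
    (1 / 2) * ∫ t in Set.Ioi (0 : ℝ), Real.exp (-t / ε) * ‖y t‖ ^ 2 ≤
      ε * ‖y 0‖ ^ 2 + 2 * ε ^ 2 * ∫ t in Set.Ioi (0 : ℝ), Real.exp (-t / ε) * ‖y' t‖ ^ 2 := by
  set A : ℝ := ∫ t in Set.Ioi (0 : ℝ), Real.exp (-t / ε) * ‖y' t‖ ^ 2 with hA_def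
  have hA_nonneg : 0 ≤ A :=
    setIntegral_nonneg measurableSet_Ioi fun t _ => by positivity
  -- the weight
  set w : ℝ → ENNReal := fun t => ENNReal.ofReal (Real.exp (-t / ε)) with hw_def
  have hwm : Measurable w :=
    ENNReal.measurable_ofReal.comp
      (Real.continuous_exp.comp ((continuous_neg.comp continuous_id).div_const ε)).measurable
  have hw0 : ∀ t, w t ≠ 0 := fun t => (ENNReal.ofReal_pos.mpr (Real.exp_pos _)).ne'
  have hwtop : ∀ t, w t ≠ ⊤ := fun _ => ENNReal.ofReal_ne_top
  -- a measurable representative of `ofReal ‖y'‖` on `(0,∞)`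
  have hφ0 : AEMeasurable (fun u => ENNReal.ofReal ‖y' u‖)
      (volume.restrict (Set.Ioi (0:ℝ))) := by
    have hnorm_eq : (fun u => ‖y' u‖) =
        fun u => Real.sqrt (Real.exp (-u / ε) * ‖y' u‖ ^ 2 * Real.exp (u / ε)) := by
      funext u
      have h1 : Real.exp (-u / ε) * ‖y' u‖ ^ 2 * Real.exp (u / ε) = ‖y' u‖ ^ 2 := by
        rw [mul_comm, ← mul_assoc, ← Real.exp_add]
        have : u / ε + -u / ε = 0 := by ring
        rw [this, Real.exp_zero, one_mul]
      rw [h1, Real.sqrt_sq (norm_nonneg _)]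
    apply ENNReal.measurable_ofReal.comp_aemeasurable
    rw [hnorm_eq]
    exact Measurable.comp_aemeasurable (g := Real.sqrt) Real.continuous_sqrt.measurable
      (hL2.aestronglyMeasurable.aemeasurable.mul
        (Real.continuous_exp.comp (continuous_id.div_const ε)).measurable.aemeasurable)
  obtain ⟨φ, hφm, hφ⟩ := hφ0
  set Φ : ℝ → ENNReal := fun t => ∫⁻ s in Set.Ioc 0 t, φ s with hΦdef
  have hΦmono : Monotone Φ := fun a b hab =>
    lintegral_mono_set (Set.Ioc_subset_Ioc_right hab)
  have hΦm : Measurable Φ := hΦmono.measurable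
  have hφres : ∀ t : ℝ, (fun u => ENNReal.ofReal ‖y' u‖)
      =ᵐ[volume.restrict (Set.Ioc 0 t)] φ := fun t =>
    ae_restrict_of_ae_restrict_of_subset Set.Ioc_subset_Ioi_self hφ
  have hΦeq : ∀ t, 0 ≤ t → Φ t = ENNReal.ofReal (∫ s in (0:ℝ)..t, ‖y' s‖) := by
    intro t ht
    have hInt : IntegrableOn (fun s => ‖y' s‖) (Set.Ioc 0 t) := ((hint t ht).norm).1
    rw [intervalIntegral.integral_of_le ht,
      ofReal_integral_eq_lintegral_ofReal hInt
        (Filter.Eventually.of_forall fun s => norm_nonneg _)]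
    exact (lintegral_congr_ae (hφres t)).symm
  have hΦtop : ∀ t, Φ t ≠ ⊤ := by
    intro t
    rcases le_or_gt 0 t with ht | ht
    · rw [hΦeq t ht]; exact ENNReal.ofReal_ne_top
    · have hempty : Set.Ioc (0:ℝ) t = ∅ := Set.Ioc_eq_empty (by exact fun h => absurd h (not_lt.mpr ht.le))
      simp [hΦdef, hempty]
  set c' : ENNReal := ENNReal.ofReal ‖y 0‖ with hc'def
  have hc'top : c' ≠ ⊤ := ENNReal.ofReal_ne_top
  set ψ : ℝ → ENNReal := fun u => φ u * (c' + Φ u) with hψdef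
  have hψm : Measurable ψ := hφm.mul (measurable_const.add hΦm)
  -- the key pointwise identity, via Tonelli
  have hkey : ∀ t : ℝ, (c' + Φ t) ^ 2 = c' ^ 2 + 2 * ∫⁻ u in Set.Ioc 0 t, ψ u := by
    intro t
    have hsw := swap_tri φ φ hφm hφm t
    have h3 : ∫⁻ u in Set.Ioc 0 t, φ u * ∫⁻ x in Set.Icc u t, φ x
        = ∫⁻ u in Set.Ioc 0 t, φ u * ∫⁻ x in Set.Ioc u t, φ x := by
      refine lintegral_congr fun u => ?_
      rw [show volume.restrict (Set.Icc u t) = volume.restrict (Set.Ioc u t) from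
        (Measure.restrict_congr_set Ioc_ae_eq_Icc).symm]
    have h2 : ∫⁻ u in Set.Ioc 0 t, φ u * Φ t
        = ∫⁻ u in Set.Ioc 0 t, (φ u * Φ u + φ u * ∫⁻ x in Set.Ioc u t, φ x) := by
      refine setLIntegral_congr_fun measurableSet_Ioc
        (fun u hu => ?_)
      rw [← mul_add]
      congr 1
      have hsplit : Set.Ioc (0:ℝ) t = Set.Ioc 0 u ∪ Set.Ioc u t :=
        (Set.Ioc_union_Ioc_eq_Ioc hu.1.le hu.2).symm
      rw [hΦdef]
      simp only
      rw [hsplit, lintegral_union measurableSet_Ioc (Set.Ioc_disjoint_Ioc_of_le le_rfl)]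
    have hΦsq : Φ t * Φ t = 2 * ∫⁻ u in Set.Ioc 0 t, φ u * Φ u := by
      calc Φ t * Φ t = (∫⁻ u in Set.Ioc 0 t, φ u) * Φ t := rfl
        _ = ∫⁻ u in Set.Ioc 0 t, φ u * Φ t := (lintegral_mul_const _ hφm).symm
        _ = ∫⁻ u in Set.Ioc 0 t, (φ u * Φ u + φ u * ∫⁻ x in Set.Ioc u t, φ x) := h2
        _ = (∫⁻ u in Set.Ioc 0 t, φ u * Φ u)
            + ∫⁻ u in Set.Ioc 0 t, φ u * ∫⁻ x in Set.Ioc u t, φ x :=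
          lintegral_add_left (hφm.mul hΦm) _
        _ = (∫⁻ u in Set.Ioc 0 t, φ u * Φ u) + ∫⁻ u in Set.Ioc 0 t, φ u * Φ u := by
          rw [← h3, ← hsw]
        _ = 2 * ∫⁻ u in Set.Ioc 0 t, φ u * Φ u := (two_mul _).symm
    have hψint : ∫⁻ u in Set.Ioc 0 t, ψ u
        = c' * Φ t + ∫⁻ u in Set.Ioc 0 t, φ u * Φ u := by
      calc ∫⁻ u in Set.Ioc 0 t, ψ u
          = ∫⁻ u in Set.Ioc 0 t, (φ u * c' + φ u * Φ u) := by
            refine lintegral_congr fun u => ?_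
            rw [hψdef]; simp only; ring
        _ = (∫⁻ u in Set.Ioc 0 t, φ u * c') + ∫⁻ u in Set.Ioc 0 t, φ u * Φ u :=
            lintegral_add_left (hφm.mul_const _) _
        _ = c' * Φ t + ∫⁻ u in Set.Ioc 0 t, φ u * Φ u := by
            rw [lintegral_mul_const _ hφm, mul_comm]
    rw [hψint, add_sq, mul_add, sq (Φ t), hΦsq]
    ring
  -- tail estimates for the weight
  have hw_tail : ∀ u T : ℝ, ∫⁻ x in Set.Icc u T, w x ≤ ENNReal.ofReal ε * w u := by
    intro u T
    calc ∫⁻ x in Set.Icc u T, w x ≤ ∫⁻ x in Set.Ici u, w x :=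
          lintegral_mono_set Set.Icc_subset_Ici_self
      _ = ENNReal.ofReal (ε * Real.exp (-u / ε)) := tail_exp hε u
      _ = ENNReal.ofReal ε * w u := ENNReal.ofReal_mul hε.le
  have hw_total : ∫⁻ x in Set.Ioi (0:ℝ), w x = ENNReal.ofReal ε := by
    rw [show volume.restrict (Set.Ioi (0:ℝ)) = volume.restrict (Set.Ici 0) from
      Measure.restrict_congr_set Ioi_ae_eq_Ici]
    have := tail_exp hε 0
    rw [this]
    norm_num
  -- identification of A
  have hA' : ∫⁻ u in Set.Ioi (0:ℝ), w u * φ u ^ 2 = ENNReal.ofReal A := by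
    calc ∫⁻ u in Set.Ioi (0:ℝ), w u * φ u ^ 2
        = ∫⁻ u in Set.Ioi (0:ℝ), ENNReal.ofReal (Real.exp (-u / ε) * ‖y' u‖ ^ 2) := by
          refine lintegral_congr_ae (hφ.mono fun u hu => ?_)
          simp only at hu ⊢
          rw [← hu, ENNReal.ofReal_mul (Real.exp_pos _).le,
            ENNReal.ofReal_pow (norm_nonneg _)]
      _ = ENNReal.ofReal A :=
          (ofReal_integral_eq_lintegral_ofReal hL2
            (Filter.Eventually.of_forall fun t => by positivity)).symm
  -- the integrand for the conclusion, bounded by g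
  set g : ℝ → ENNReal := fun t => w t * (c' + Φ t) ^ 2 with hgdef
  have hgm : Measurable g := hwm.mul ((measurable_const.add hΦm).pow_const 2)
  set B : ENNReal := ENNReal.ofReal (2 * ε * ‖y 0‖ ^ 2 + 4 * ε ^ 2 * A) with hBdef
  -- the truncated bound
  have hbound : ∀ n : ℕ, ∫⁻ t in Set.Ioc (0:ℝ) (n:ℝ), g t ≤ B := by
    intro n
    set Jn : ENNReal := ∫⁻ t in Set.Ioc (0:ℝ) (n:ℝ), g t with hJndef
    have hJn_top : Jn ≠ ⊤ := by
      have hb : Jn ≤ ENNReal.ofReal ε * (c' + Φ (n:ℝ)) ^ 2 := by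
        calc Jn ≤ ∫⁻ t in Set.Ioc (0:ℝ) (n:ℝ), w t * (c' + Φ (n:ℝ)) ^ 2 := by
              refine setLIntegral_mono' measurableSet_Ioc fun t ht => ?_
              exact mul_le_mul_right
                (pow_le_pow_left₀ zero_le (add_le_add_right (hΦmono ht.2) c') 2) _
          _ = (∫⁻ t in Set.Ioc (0:ℝ) (n:ℝ), w t) * (c' + Φ (n:ℝ)) ^ 2 :=
              lintegral_mul_const _ hwm
          _ ≤ ENNReal.ofReal ε * (c' + Φ (n:ℝ)) ^ 2 := by
              refine mul_le_mul_left ?_ _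
              rw [← hw_total]
              exact lintegral_mono_set Set.Ioc_subset_Ioi_self
      exact ne_top_of_le_ne_top
        (ENNReal.mul_ne_top ENNReal.ofReal_ne_top
          (ENNReal.pow_ne_top (ENNReal.add_ne_top.mpr ⟨hc'top, hΦtop _⟩))) hb
    -- Cauchy-Schwarz piece
    have hCSfull : ∫⁻ u in Set.Ioc (0:ℝ) (n:ℝ), w u * ψ u ≤
        (ENNReal.ofReal A) ^ (1/2:ℝ) * Jn ^ (1/2:ℝ) := by
      set F : ℝ → ENNReal := fun u => w u ^ (1/2:ℝ) * φ u with hFdef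
      set G : ℝ → ENNReal := fun u => w u ^ (1/2:ℝ) * (c' + Φ u) with hGdef
      have hFm : Measurable F :=
        (ENNReal.continuous_rpow_const.measurable.comp hwm).mul hφm
      have hGm : Measurable G :=
        (ENNReal.continuous_rpow_const.measurable.comp hwm).mul (measurable_const.add hΦm)
      have hCS := ENNReal.lintegral_mul_le_Lp_mul_Lq
        (volume.restrict (Set.Ioc (0:ℝ) (n:ℝ)))
        Real.HolderConjugate.two_two
        hFm.aemeasurable hGm.aemeasurable
      have hFG : ∀ u, w u * ψ u = (F * G) u := by
        intro u
        have hww : w u ^ (1/2:ℝ) * w u ^ (1/2:ℝ) = w u := by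
          rw [← ENNReal.rpow_add _ _ (hw0 u) (hwtop u)]
          norm_num
        show w u * ψ u = F u * G u
        rw [hFdef, hGdef, hψdef]
        simp only
        calc w u * (φ u * (c' + Φ u))
            = (w u ^ (1/2:ℝ) * w u ^ (1/2:ℝ)) * (φ u * (c' + Φ u)) := by rw [hww]
          _ = (w u ^ (1/2:ℝ) * φ u) * (w u ^ (1/2:ℝ) * (c' + Φ u)) := by ring
      have hF2 : ∀ u, F u ^ (2:ℝ) = w u * φ u ^ 2 := by
        intro u
        rw [hFdef]
        simp only
        rw [ENNReal.mul_rpow_of_nonneg _ _ (by norm_num : (0:ℝ) ≤ 2),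
          ← ENNReal.rpow_mul, ← ENNReal.rpow_natCast (φ u) 2]
        norm_num
      have hG2 : ∀ u, G u ^ (2:ℝ) = w u * (c' + Φ u) ^ 2 := by
        intro u
        rw [hGdef]
        simp only
        rw [ENNReal.mul_rpow_of_nonneg _ _ (by norm_num : (0:ℝ) ≤ 2),
          ← ENNReal.rpow_mul, ← ENNReal.rpow_natCast (c' + Φ u) 2]
        norm_num
      calc ∫⁻ u in Set.Ioc (0:ℝ) (n:ℝ), w u * ψ u
          = ∫⁻ u in Set.Ioc (0:ℝ) (n:ℝ), (F * G) u := lintegral_congr fun u => hFG u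
        _ ≤ (∫⁻ u in Set.Ioc (0:ℝ) (n:ℝ), F u ^ (2:ℝ)) ^ (1/2:ℝ) *
            (∫⁻ u in Set.Ioc (0:ℝ) (n:ℝ), G u ^ (2:ℝ)) ^ (1/2:ℝ) := hCS
        _ = (∫⁻ u in Set.Ioc (0:ℝ) (n:ℝ), w u * φ u ^ 2) ^ (1/2:ℝ) * Jn ^ (1/2:ℝ) := by
            congr 1
            · congr 1
              exact lintegral_congr fun u => hF2 u
            · congr 1
              rw [hJndef]
              exact lintegral_congr fun u => hG2 u
        _ ≤ (ENNReal.ofReal A) ^ (1/2:ℝ) * Jn ^ (1/2:ℝ) := by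
            refine mul_le_mul_left (ENNReal.rpow_le_rpow ?_ (by norm_num)) _
            rw [← hA']
            exact lintegral_mono_set Set.Ioc_subset_Ioi_self
    -- main chain
    have hinner_m : Measurable fun t : ℝ => ∫⁻ u in Set.Ioc 0 t, ψ u :=
      Monotone.measurable fun a b hab =>
        lintegral_mono_set (Set.Ioc_subset_Ioc_right hab)
    have hchain : Jn ≤ ENNReal.ofReal ε * c' ^ 2 +
        2 * (ENNReal.ofReal ε * ((ENNReal.ofReal A) ^ (1/2:ℝ) * Jn ^ (1/2:ℝ))) := by
      calc Jn = ∫⁻ t in Set.Ioc (0:ℝ) (n:ℝ),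
            (w t * c' ^ 2 + 2 * (w t * ∫⁻ u in Set.Ioc 0 t, ψ u)) := by
            rw [hJndef]
            refine lintegral_congr fun t => ?_
            rw [hgdef]
            simp only
            rw [hkey t]
            ring
        _ = (∫⁻ t in Set.Ioc (0:ℝ) (n:ℝ), w t * c' ^ 2)
            + 2 * ∫⁻ t in Set.Ioc (0:ℝ) (n:ℝ), w t * ∫⁻ u in Set.Ioc 0 t, ψ u := by
            rw [lintegral_add_left (hwm.mul_const _),
              lintegral_const_mul (f := fun t => w t * ∫⁻ u in Set.Ioc 0 t, ψ u) 2 (hwm.mul hinner_m)]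
        _ ≤ ENNReal.ofReal ε * c' ^ 2 +
            2 * (ENNReal.ofReal ε * ((ENNReal.ofReal A) ^ (1/2:ℝ) * Jn ^ (1/2:ℝ))) := by
            refine add_le_add ?_ (mul_le_mul_right ?_ 2)
            · rw [lintegral_mul_const _ hwm]
              refine mul_le_mul_left ?_ _
              rw [← hw_total]
              exact lintegral_mono_set Set.Ioc_subset_Ioi_self
            · calc ∫⁻ t in Set.Ioc (0:ℝ) (n:ℝ), w t * ∫⁻ u in Set.Ioc 0 t, ψ u
                  = ∫⁻ u in Set.Ioc (0:ℝ) (n:ℝ), ψ u * ∫⁻ x in Set.Icc u (n:ℝ), w x :=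
                    swap_tri ψ w hψm hwm (n:ℝ)
                _ ≤ ∫⁻ u in Set.Ioc (0:ℝ) (n:ℝ), ψ u * (ENNReal.ofReal ε * w u) :=
                    lintegral_mono fun u => mul_le_mul_right (hw_tail u (n:ℝ)) _
                _ = ENNReal.ofReal ε * ∫⁻ u in Set.Ioc (0:ℝ) (n:ℝ), w u * ψ u := by
                    rw [← lintegral_const_mul (f := fun u => w u * ψ u) _ (hwm.mul hψm)]
                    refine lintegral_congr fun u => ?_
                    ring
                _ ≤ ENNReal.ofReal ε * ((ENNReal.ofReal A) ^ (1/2:ℝ) * Jn ^ (1/2:ℝ)) :=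
                    mul_le_mul_right hCSfull _
    -- pass to the reals
    have hrhs_top : ENNReal.ofReal ε * c' ^ 2 +
        2 * (ENNReal.ofReal ε * ((ENNReal.ofReal A) ^ (1/2:ℝ) * Jn ^ (1/2:ℝ))) ≠ ⊤ := by
      refine ENNReal.add_ne_top.mpr ⟨ENNReal.mul_ne_top ENNReal.ofReal_ne_top
        (ENNReal.pow_ne_top hc'top), ?_⟩
      refine ENNReal.mul_ne_top (by norm_num) (ENNReal.mul_ne_top ENNReal.ofReal_ne_top
        (ENNReal.mul_ne_top ?_ ?_))
      · exact ENNReal.rpow_ne_top_of_nonneg (by norm_num) ENNReal.ofReal_ne_top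
      · exact ENNReal.rpow_ne_top_of_nonneg (by norm_num) hJn_top
    have hreal := ENNReal.toReal_mono hrhs_top hchain
    rw [ENNReal.toReal_add (ENNReal.mul_ne_top ENNReal.ofReal_ne_top
        (ENNReal.pow_ne_top hc'top))
        (by
          refine ENNReal.mul_ne_top (by norm_num) (ENNReal.mul_ne_top ENNReal.ofReal_ne_top
            (ENNReal.mul_ne_top ?_ ?_))
          · exact ENNReal.rpow_ne_top_of_nonneg (by norm_num) ENNReal.ofReal_ne_top
          · exact ENNReal.rpow_ne_top_of_nonneg (by norm_num) hJn_top),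
      ENNReal.toReal_mul, ENNReal.toReal_mul, ENNReal.toReal_mul, ENNReal.toReal_mul,
      ENNReal.toReal_pow, ← ENNReal.toReal_rpow, ← ENNReal.toReal_rpow,
      ENNReal.toReal_ofReal hε.le, ENNReal.toReal_ofReal hA_nonneg,
      hc'def, ENNReal.toReal_ofReal (norm_nonneg _)] at hreal
    set j : ℝ := Jn.toReal with hjdef
    have hj0 : 0 ≤ j := ENNReal.toReal_nonneg
    have hsqj : (j ^ (1/2:ℝ)) ^ 2 = j := by
      rw [← Real.rpow_natCast (j ^ (1/2:ℝ)) 2, ← Real.rpow_mul hj0]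
      norm_num
    have hsqa : (A ^ (1/2:ℝ)) ^ 2 = A := by
      rw [← Real.rpow_natCast (A ^ (1/2:ℝ)) 2, ← Real.rpow_mul hA_nonneg]
      norm_num
    have h1 : 0 ≤ j ^ (1/2:ℝ) := Real.rpow_nonneg hj0 _
    have h2 : 0 ≤ A ^ (1/2:ℝ) := Real.rpow_nonneg hA_nonneg _
    have htwo : (2:ENNReal).toReal = 2 := by norm_num
    rw [htwo] at hreal
    have hj : j ≤ 2 * ε * ‖y 0‖ ^ 2 + 4 * ε ^ 2 * A := by
      nlinarith [sq_nonneg (j ^ (1/2:ℝ) - 2 * ε * A ^ (1/2:ℝ)), hsqj, hsqa,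
        mul_nonneg hε.le (mul_nonneg h2 h1), sq_nonneg (‖y 0‖), hε.le]
    calc Jn = ENNReal.ofReal j := (ENNReal.ofReal_toReal hJn_top).symm
      _ ≤ B := by rw [hBdef]; exact ENNReal.ofReal_le_ofReal hj
  -- pass to the full half-line by monotone convergence
  have hJle : ∫⁻ t in Set.Ioi (0:ℝ), g t ≤ B := by
    have hind : ∀ n : ℕ, Measurable ((Set.Ioc (0:ℝ) (n:ℝ)).indicator g) := fun n =>
      hgm.indicator measurableSet_Ioc
    have hmono : Monotone fun n : ℕ => (Set.Ioc (0:ℝ) (n:ℝ)).indicator g := by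
      intro m n hmn
      exact Set.indicator_le_indicator_of_subset
        (Set.Ioc_subset_Ioc_right (by exact_mod_cast hmn)) (fun _ => zero_le)
    have hsup : ∀ t, (⨆ n : ℕ, (Set.Ioc (0:ℝ) (n:ℝ)).indicator g t)
        = (Set.Ioi (0:ℝ)).indicator g t := by
      intro t
      by_cases ht : 0 < t
      · obtain ⟨n, hn⟩ := exists_nat_ge t
        apply le_antisymm
        · refine iSup_le fun m => ?_
          exact Set.indicator_le_indicator_of_subset Set.Ioc_subset_Ioi_self
            (fun _ => zero_le) t
        · rw [Set.indicator_of_mem (Set.mem_Ioi.mpr ht)]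
          refine le_iSup_of_le n ?_
          have htn : t ∈ Set.Ioc (0:ℝ) (n:ℝ) := ⟨ht, hn⟩
          exact le_of_eq (Set.indicator_of_mem htn g).symm
      · have h1 : ∀ n : ℕ, (Set.Ioc (0:ℝ) (n:ℝ)).indicator g t = 0 := fun n =>
          Set.indicator_of_notMem (fun hmem => ht hmem.1) _
        have h2 : (Set.Ioi (0:ℝ)).indicator g t = 0 :=
          Set.indicator_of_notMem ht _
        simp [h1, h2]
    calc ∫⁻ t in Set.Ioi (0:ℝ), g t
        = ∫⁻ t, (Set.Ioi (0:ℝ)).indicator g t := (lintegral_indicator measurableSet_Ioi g).symm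
      _ = ∫⁻ t, ⨆ n : ℕ, (Set.Ioc (0:ℝ) (n:ℝ)).indicator g t := by simp_rw [hsup]
      _ = ⨆ n : ℕ, ∫⁻ t, (Set.Ioc (0:ℝ) (n:ℝ)).indicator g t := lintegral_iSup hind hmono
      _ ≤ B := by
          refine iSup_le fun n => ?_
          rw [lintegral_indicator measurableSet_Ioc]
          exact hbound n
  -- measurability of y on (0,∞)
  have hIoiUnion : Set.Ioi (0:ℝ) = ⋃ n : ℕ, Set.Ioc (0:ℝ) (n:ℝ) := by
    ext x
    simp only [Set.mem_Ioi, Set.mem_iUnion, Set.mem_Ioc]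
    constructor
    · intro hx
      obtain ⟨n, hn⟩ := exists_nat_ge x
      exact ⟨n, hx, hn⟩
    · rintro ⟨n, hn, -⟩
      exact hn
  have hyae : AEStronglyMeasurable y (volume.restrict (Set.Ioi (0:ℝ))) := by
    rw [hIoiUnion]
    refine aestronglyMeasurable_iUnion_iff.mpr fun n => ?_
    have hIcc : IntegrableOn y' (Set.Icc (0:ℝ) (n:ℝ)) := by
      rw [integrableOn_Icc_iff_integrableOn_Ioc]
      exact (hint (n:ℝ) (Set.mem_Ici.mpr (Nat.cast_nonneg n))).1
    have hcont : ContinuousOn (fun t => y 0 + ∫ s in Set.Ioc (0:ℝ) t, y' s)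
        (Set.Icc (0:ℝ) (n:ℝ)) :=
      continuousOn_const.add (intervalIntegral.continuousOn_primitive hIcc)
    have heq : Set.EqOn y (fun t => y 0 + ∫ s in Set.Ioc (0:ℝ) t, y' s)
        (Set.Icc (0:ℝ) (n:ℝ)) := by
      intro t ht
      rw [hy t ht.1, intervalIntegral.integral_of_le ht.1]
    exact ((hcont.congr heq).mono Set.Ioc_subset_Icc_self).aestronglyMeasurable
      measurableSet_Ioc
  -- conclusion
  set fy : ℝ → ℝ := fun t => Real.exp (-t / ε) * ‖y t‖ ^ 2 with hfydef
  have hfym : AEStronglyMeasurable fy (volume.restrict (Set.Ioi (0:ℝ))) := by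
    have hfy2 : fy = fun t => Real.exp (-t / ε) * (‖y t‖ * ‖y t‖) := by
      funext t
      rw [hfydef]
      simp only
      ring
    rw [hfy2]
    exact ((Real.continuous_exp.comp
      ((continuous_neg.comp continuous_id).div_const ε)).aestronglyMeasurable).mul
      (hyae.norm.mul hyae.norm)
  have hfynn : 0 ≤ᵐ[volume.restrict (Set.Ioi (0:ℝ))] fy :=
    Filter.Eventually.of_forall fun t => by
      rw [hfydef]; positivity
  have hfyle : ∫⁻ t in Set.Ioi (0:ℝ), ENNReal.ofReal (fy t) ≤ B := by
    refine le_trans (lintegral_mono_ae ?_) hJle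
    rw [ae_restrict_iff' measurableSet_Ioi]
    refine Filter.Eventually.of_forall fun t ht => ?_
    have h0t : (0:ℝ) ≤ t := le_of_lt ht
    have hyle : ENNReal.ofReal ‖y t‖ ≤ c' + Φ t := by
      have hb : ‖y t‖ ≤ ‖y 0‖ + ∫ s in (0:ℝ)..t, ‖y' s‖ := by
        rw [hy t h0t]
        exact (norm_add_le _ _).trans
          (add_le_add_right (intervalIntegral.norm_integral_le_integral_norm h0t) _)
      calc ENNReal.ofReal ‖y t‖
          ≤ ENNReal.ofReal (‖y 0‖ + ∫ s in (0:ℝ)..t, ‖y' s‖) := ENNReal.ofReal_le_ofReal hb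
        _ = c' + ENNReal.ofReal (∫ s in (0:ℝ)..t, ‖y' s‖) :=
            ENNReal.ofReal_add (norm_nonneg _)
              (intervalIntegral.integral_nonneg h0t fun s _ => norm_nonneg _)
        _ = c' + Φ t := by rw [hΦeq t h0t]
    calc ENNReal.ofReal (fy t) = w t * ENNReal.ofReal ‖y t‖ ^ 2 := by
          rw [hfydef, hw_def]
          simp only
          rw [ENNReal.ofReal_mul (Real.exp_pos _).le, ENNReal.ofReal_pow (norm_nonneg _)]
      _ ≤ w t * (c' + Φ t) ^ 2 :=
          mul_le_mul_right (pow_le_pow_left₀ zero_le hyle 2) _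
  have hfyint : IntegrableOn fy (Set.Ioi (0:ℝ)) := by
    refine ⟨hfym, ?_⟩
    rw [hasFiniteIntegral_iff_ofReal hfynn]
    exact lt_of_le_of_lt hfyle ENNReal.ofReal_lt_top
  have hBnn : 0 ≤ 2 * ε * ‖y 0‖ ^ 2 + 4 * ε ^ 2 * A := by
    have h1 : 0 ≤ 2 * ε * ‖y 0‖ ^ 2 := by positivity
    have h2 : 0 ≤ 4 * ε ^ 2 * A := mul_nonneg (by positivity) hA_nonneg
    linarith
  have hL : ∫ t in Set.Ioi (0:ℝ), fy t ≤ 2 * ε * ‖y 0‖ ^ 2 + 4 * ε ^ 2 * A := by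
    rw [integral_eq_lintegral_of_nonneg_ae hfynn hfym]
    have := ENNReal.toReal_mono (ENNReal.ofReal_ne_top : B ≠ ⊤) hfyle
    rwa [ENNReal.toReal_ofReal hBnn] at this
  have hgoal : ∫ t in Set.Ioi (0:ℝ), Real.exp (-t / ε) * ‖y t‖ ^ 2
      ≤ 2 * ε * ‖y 0‖ ^ 2 + 4 * ε ^ 2 * A := hL
  linarith
end

section
/- Let T ∈ (0,∞) and g ∈ L¹(0,T). For ε > 0 define G_ε(t) := e^{t/ε} ∫_t^T e^{-s/ε} |g(s)| ds for t ∈ [0,T]. Then sup_{t ∈ [0,T]} G_ε(t) → 0 as ε → 0. -/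
open MeasureTheory Real Set Filter

/-- Lemma (tech): for `g ∈ L¹(0,T)`, the functions
`G_ε(t) = e^{t/ε} ∫_t^T e^{-s/ε}|g(s)| ds` converge to `0` uniformly on `[0,T]`
as `ε → 0⁺`, i.e. their sup over `[0,T]` tends to `0`. -/
theorem stmt1 (T : ℝ) (hT : 0 < T) (g : ℝ → ℝ)
    (hg : IntegrableOn g (Set.Ioo 0 T) volume) :
    Filter.Tendsto
      (fun ε : ℝ =>
        sSup ((fun t : ℝ => Real.exp (t / ε) * ∫ s in t..T, Real.exp (-s / ε) * |g s|) ''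
          Set.Icc 0 T))
      (nhdsWithin 0 (Set.Ioi 0)) (nhds 0) := by
  have hg' : IntegrableOn g (Set.Ioc 0 T) volume := hg.congr_set_ae Ioo_ae_eq_Ioc.symm
  have habs : IntegrableOn (fun s => |g s|) (Set.Ioc 0 T) volume := hg'.abs
  set M : ℝ := ∫ s in Set.Ioc 0 T, |g s| with hM
  have hM0 : 0 ≤ M := setIntegral_nonneg measurableSet_Ioc fun _ _ => abs_nonneg _
  rw [Metric.tendsto_nhds]
  intro η hη
  -- absolute continuity of the integral
  have hfin : (∫⁻ x, ‖g x‖₊ ∂(volume.restrict (Set.Ioc 0 T))) ≠ ⊤ := ne_of_lt hg'.2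
  obtain ⟨δ, hδ0, hδ⟩ := exists_pos_setLIntegral_lt_of_measure_lt hfin
    (ε := ENNReal.ofReal (η / 4)) (ENNReal.ofReal_pos.2 (by positivity)).ne'
  have hmin_ne_top : min δ 1 ≠ ⊤ :=
    ne_top_of_le_ne_top ENNReal.one_ne_top (min_le_right _ _)
  set δ' : ℝ := (min δ 1).toReal with hδ'
  have hδ'0 : 0 < δ' :=
    ENNReal.toReal_pos (lt_min hδ0 zero_lt_one).ne' hmin_ne_top
  set r : ℝ := δ' / 2 with hr
  have hr0 : 0 < r := by positivity
  have key : ∀ A : Set ℝ, MeasurableSet A → A ⊆ Set.Ioc 0 T → volume A ≤ ENNReal.ofReal r →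
      ∫ s in A, |g s| ≤ η / 4 := by
    intro A hAm hA hAμ
    have h1 : volume.restrict (Set.Ioc 0 T) A ≤ volume A := Measure.restrict_apply_le _ _
    have h2 : volume.restrict (Set.Ioc 0 T) A < δ := by
      refine lt_of_le_of_lt (h1.trans hAμ) ?_
      calc ENNReal.ofReal r < ENNReal.ofReal δ' := by
            exact ENNReal.ofReal_lt_ofReal_iff_of_nonneg hr0.le |>.2 (by rw [hr]; linarith)
        _ = min δ 1 := ENNReal.ofReal_toReal hmin_ne_top
        _ ≤ δ := min_le_left _ _
    have h3 := hδ A h2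
    rw [Measure.restrict_restrict hAm, Set.inter_eq_self_of_subset_left hA] at h3
    have h4 : ∫ s in A, |g s| = (∫⁻ x in A, ‖g x‖₊).toReal := by
      have := integral_norm_eq_lintegral_enorm
        ((hg'.mono_set hA).aestronglyMeasurable)
      simpa [Real.norm_eq_abs, enorm_eq_nnnorm] using this
    rw [h4]
    exact ENNReal.toReal_le_of_le_ofReal (by positivity) h3.le
  -- the exponential term tends to 0
  have hexp : Tendsto (fun ε : ℝ => Real.exp (-r / ε) * M) (nhdsWithin 0 (Set.Ioi 0)) (nhds 0) := by
    have h1 : Tendsto (fun ε : ℝ => -r / ε) (nhdsWithin 0 (Set.Ioi 0)) atBot := by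
      have h2 : Tendsto (fun ε : ℝ => r * ε⁻¹) (nhdsWithin 0 (Set.Ioi 0)) atTop :=
        Tendsto.const_mul_atTop hr0 tendsto_inv_nhdsGT_zero
      have := tendsto_neg_atTop_atBot.comp h2
      refine this.congr fun ε => ?_
      simp [div_eq_mul_inv, neg_mul]
    have h2 := (Real.tendsto_exp_atBot.comp h1).mul_const M
    simpa using h2
  have hev : ∀ᶠ ε in nhdsWithin 0 (Set.Ioi 0), Real.exp (-r / ε) * M < η / 4 :=
    hexp.eventually_lt_const (by positivity)
  filter_upwards [hev, self_mem_nhdsWithin] with ε hε1 hε2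
  have hε0 : 0 < ε := hε2
  set S := (fun t : ℝ => Real.exp (t / ε) * ∫ s in t..T, Real.exp (-s / ε) * |g s|) ''
    Set.Icc 0 T with hS
  have hbound : ∀ x ∈ S, x ≤ η / 2 := by
    rintro x ⟨t, ht, rfl⟩
    have ht0 : 0 ≤ t := ht.1
    have htT : t ≤ T := ht.2
    set m : ℝ := min (t + r) T with hm
    have hm1 : t ≤ m := le_min (by linarith) htT
    have hm2 : m ≤ T := min_le_right _ _
    have hm0 : 0 ≤ m := le_min (by linarith) hT.le
    -- integrability
    have hint : IntegrableOn (fun s => Real.exp (-s / ε) * |g s|) (Set.Ioc t T) volume := by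
      refine Integrable.bdd_mul (c := 1)
        (habs.mono_set (Set.Ioc_subset_Ioc ht0 le_rfl))
        (Continuous.aestronglyMeasurable (by continuity)) ?_
      filter_upwards [ae_restrict_mem measurableSet_Ioc] with s hs
      rw [Real.norm_eq_abs, abs_of_pos (Real.exp_pos _)]
      rw [← Real.exp_zero]
      apply Real.exp_le_exp.2
      have hs0 : 0 < s := lt_of_le_of_lt ht0 hs.1
      rw [neg_div]
      exact neg_nonpos.2 (by positivity)
    have hintF : IntegrableOn
        (fun s => Real.exp (t / ε) * (Real.exp (-s / ε) * |g s|)) (Set.Ioc t T) volume :=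
      hint.const_mul _
    have e1 : Real.exp (t / ε) * ∫ s in t..T, Real.exp (-s / ε) * |g s|
        = ∫ s in Set.Ioc t T, Real.exp (t / ε) * (Real.exp (-s / ε) * |g s|) := by
      rw [intervalIntegral.integral_of_le htT]
      exact (integral_const_mul _ _).symm
    have e2 : (∫ s in Set.Ioc t T, Real.exp (t / ε) * (Real.exp (-s / ε) * |g s|))
        = (∫ s in Set.Ioc t m, Real.exp (t / ε) * (Real.exp (-s / ε) * |g s|))
          + ∫ s in Set.Ioc m T, Real.exp (t / ε) * (Real.exp (-s / ε) * |g s|) := by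
      rw [← Set.Ioc_union_Ioc_eq_Ioc hm1 hm2]
      exact setIntegral_union (Set.Ioc_disjoint_Ioc_of_le le_rfl) measurableSet_Ioc
        (hintF.mono_set (Set.Ioc_subset_Ioc le_rfl hm2))
        (hintF.mono_set (Set.Ioc_subset_Ioc hm1 le_rfl))
    have b1 : (∫ s in Set.Ioc t m, Real.exp (t / ε) * (Real.exp (-s / ε) * |g s|))
        ≤ ∫ s in Set.Ioc t m, |g s| := by
      refine setIntegral_mono_on (hintF.mono_set (Set.Ioc_subset_Ioc le_rfl hm2))
        (habs.mono_set (Set.Ioc_subset_Ioc ht0 hm2)) measurableSet_Ioc ?_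
      intro s hs
      have h5 : Real.exp (t / ε) * Real.exp (-s / ε) ≤ 1 := by
        rw [← Real.exp_add, ← Real.exp_zero]
        apply Real.exp_le_exp.2
        have h6 : t - s ≤ 0 := by have := hs.1; linarith
        rw [neg_div, ← sub_eq_add_neg, ← sub_div]
        exact div_nonpos_of_nonpos_of_nonneg h6 hε0.le
      calc Real.exp (t / ε) * (Real.exp (-s / ε) * |g s|)
          = (Real.exp (t / ε) * Real.exp (-s / ε)) * |g s| := by ring
        _ ≤ 1 * |g s| := mul_le_mul_of_nonneg_right h5 (abs_nonneg _)
        _ = |g s| := one_mul _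
    have b1' : (∫ s in Set.Ioc t m, |g s|) ≤ η / 4 := by
      refine key _ measurableSet_Ioc (Set.Ioc_subset_Ioc ht0 hm2) ?_
      rw [Real.volume_Ioc]
      refine ENNReal.ofReal_le_ofReal ?_
      have : m ≤ t + r := min_le_left _ _
      linarith
    have b2 : (∫ s in Set.Ioc m T, Real.exp (t / ε) * (Real.exp (-s / ε) * |g s|))
        ≤ Real.exp (-r / ε) * M := by
      have step1 : (∫ s in Set.Ioc m T, Real.exp (t / ε) * (Real.exp (-s / ε) * |g s|))
          ≤ ∫ s in Set.Ioc m T, Real.exp (-r / ε) * |g s| := by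
        refine setIntegral_mono_on (hintF.mono_set (Set.Ioc_subset_Ioc hm1 le_rfl))
          ((habs.mono_set (Set.Ioc_subset_Ioc hm0 le_rfl)).const_mul _)
          measurableSet_Ioc ?_
        intro s hs
        have hs' : t + r < s := by
          rcases le_or_gt (t + r) T with h | h
          · have : m = t + r := min_eq_left h
            rw [this] at hs; exact hs.1
          · have : m = T := min_eq_right h.le
            rw [this] at hs; exact absurd hs.2 (not_le.2 hs.1)
        have h5 : Real.exp (t / ε) * Real.exp (-s / ε) ≤ Real.exp (-r / ε) := by
          rw [← Real.exp_add]
          apply Real.exp_le_exp.2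
          have h6 : t - s ≤ -r := by linarith
          have h7 : (t - s) / ε ≤ -r / ε := (div_le_div_iff_of_pos_right hε0).2 h6
          rw [sub_div] at h7
          rw [neg_div] at h7
          rw [neg_div, neg_div, ← sub_eq_add_neg]
          linarith
        calc Real.exp (t / ε) * (Real.exp (-s / ε) * |g s|)
            = (Real.exp (t / ε) * Real.exp (-s / ε)) * |g s| := by ring
          _ ≤ Real.exp (-r / ε) * |g s| := mul_le_mul_of_nonneg_right h5 (abs_nonneg _)
      have step2 : (∫ s in Set.Ioc m T, Real.exp (-r / ε) * |g s|)
          = Real.exp (-r / ε) * ∫ s in Set.Ioc m T, |g s| := integral_const_mul _ _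
      have step3 : (∫ s in Set.Ioc m T, |g s|) ≤ M := by
        refine setIntegral_mono_set habs
          (Filter.Eventually.of_forall fun x => abs_nonneg _) ?_
        exact (Set.Ioc_subset_Ioc hm0 le_rfl).eventuallyLE
      calc (∫ s in Set.Ioc m T, Real.exp (t / ε) * (Real.exp (-s / ε) * |g s|))
          ≤ ∫ s in Set.Ioc m T, Real.exp (-r / ε) * |g s| := step1
        _ = Real.exp (-r / ε) * ∫ s in Set.Ioc m T, |g s| := step2
        _ ≤ Real.exp (-r / ε) * M :=
            mul_le_mul_of_nonneg_left step3 (Real.exp_pos _).le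
    calc Real.exp (t / ε) * ∫ s in t..T, Real.exp (-s / ε) * |g s|
        = (∫ s in Set.Ioc t m, Real.exp (t / ε) * (Real.exp (-s / ε) * |g s|))
          + ∫ s in Set.Ioc m T, Real.exp (t / ε) * (Real.exp (-s / ε) * |g s|) := by
          rw [e1, e2]
      _ ≤ η / 4 + Real.exp (-r / ε) * M := add_le_add (b1.trans b1') b2
      _ ≤ η / 4 + η / 4 := by linarith
      _ = η / 2 := by ring
  have h0mem : (0 : ℝ) ∈ S := ⟨T, ⟨hT.le, le_rfl⟩, by simp⟩
  have hSup_le : sSup S ≤ η / 2 := Real.sSup_le hbound (by positivity)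
  have hSup_ge : 0 ≤ sSup S := le_csSup ⟨η / 2, fun x hx => hbound x hx⟩ h0mem
  rw [Real.dist_eq, sub_zero, abs_of_nonneg hSup_ge]
  linarith
end

section
/- Let A ∈ ℝ^{N×N} and ε > 0, and define the block matrix A_ε ∈ ℝ^{2N×2N} with blocks (0, I_N; (1/ε)A, (1/ε)I_N). Then λ ∈ ℂ is an eigenvalue of A_ε if and only if λ(ελ − 1) is an eigenvalue of A. -/
open Matrix Polynomial

lemma eval_charpoly_aux {n : Type*} [DecidableEq n] [Fintype n]
    (M : Matrix n n ℂ) (μ : ℂ) :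
    M.charpoly.eval μ = (μ • (1 : Matrix n n ℂ) - M).det := by
  rw [Matrix.charpoly, eval_det, matPolyEquiv_charmatrix]
  simp only [eval_sub, eval_X, eval_C]
  congr 1
  ext i j
  simp [Matrix.scalar, Matrix.one_apply, Matrix.diagonal, algebraMap, Algebra.algebraMap]

lemma det_blocks_aux {n : ℕ} (a d : ℂ) (C : Matrix (Fin n) (Fin n) ℂ)
    (h : a ≠ 0 ∨ d ≠ 0) :
    (Matrix.fromBlocks (a • (1 : Matrix (Fin n) (Fin n) ℂ)) (-1) C
      (d • (1 : Matrix (Fin n) (Fin n) ℂ))).det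
      = ((a * d) • (1 : Matrix (Fin n) (Fin n) ℂ) + C).det := by
  rcases h with ha | hd
  · have key : Matrix.fromBlocks (a • (1 : Matrix (Fin n) (Fin n) ℂ)) (-1) C (d • 1)
        = Matrix.fromBlocks 1 0 (a⁻¹ • C) 1 *
          Matrix.fromBlocks (a • 1) (-1) 0 (d • 1 + a⁻¹ • C) := by
      rw [Matrix.fromBlocks_multiply]
      congr 1 <;>
        simp [Matrix.smul_mul, Matrix.mul_smul, smul_smul, inv_mul_cancel₀ ha,
          mul_inv_cancel₀ ha]
    rw [key, det_mul, det_fromBlocks_zero₁₂, det_fromBlocks_zero₂₁, det_one, one_mul, one_mul,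
      ← det_mul, Matrix.smul_mul, Matrix.one_mul, smul_add, smul_smul, smul_smul,
      mul_inv_cancel₀ ha, one_smul]
  · have key : Matrix.fromBlocks (a • (1 : Matrix (Fin n) (Fin n) ℂ)) (-1) C (d • 1)
        = Matrix.fromBlocks 1 (-(d⁻¹ • (1 : Matrix (Fin n) (Fin n) ℂ))) 0 1 *
          Matrix.fromBlocks (a • 1 + d⁻¹ • C) 0 C (d • 1) := by
      rw [Matrix.fromBlocks_multiply]
      congr 1 <;>
        simp [Matrix.smul_mul, Matrix.mul_smul, smul_smul, inv_mul_cancel₀ hd,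
          mul_inv_cancel₀ hd]
    rw [key, det_mul, det_fromBlocks_zero₂₁, det_fromBlocks_zero₁₂, det_one, one_mul, one_mul,
      ← det_mul, Matrix.add_mul, Matrix.smul_mul, Matrix.smul_mul, Matrix.one_mul,
      Matrix.mul_smul, Matrix.mul_one, smul_smul, smul_smul, inv_mul_cancel₀ hd, one_smul]

/-- For the block matrix `A_ε = (0, I; (1/ε)A, (1/ε)I)`, a complex number `λ` is an
eigenvalue of `A_ε` (a root of its characteristic polynomial) iff `λ(ελ − 1)` is an
eigenvalue of `A`. -/
theorem stmt2 (N : ℕ) (A : Matrix (Fin N) (Fin N) ℝ) (ε : ℝ) (hε : 0 < ε)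
    (Aeps : Matrix (Fin N ⊕ Fin N) (Fin N ⊕ Fin N) ℝ)
    (hAeps : Aeps = Matrix.fromBlocks 0 1 ((1 / ε) • A) ((1 / ε) • (1 : Matrix (Fin N) (Fin N) ℝ))) :
    ∀ lam : ℂ,
      ((Aeps.map (algebraMap ℝ ℂ)).charpoly.IsRoot lam ↔
        (A.map (algebraMap ℝ ℂ)).charpoly.IsRoot (lam * ((ε : ℂ) * lam - 1))) := by
  intro lam
  set A' : Matrix (Fin N) (Fin N) ℂ := A.map (algebraMap ℝ ℂ) with hA'
  have hε' : (ε : ℂ) ≠ 0 := by exact_mod_cast hε.ne'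
  have hmap : Aeps.map (algebraMap ℝ ℂ)
      = Matrix.fromBlocks 0 1 (((ε : ℂ))⁻¹ • A') (((ε : ℂ))⁻¹ • 1) := by
    subst hAeps
    ext (i | i) (j | j)
    · simp [Matrix.map_apply]
    · simp [Matrix.map_apply, Matrix.one_apply, apply_ite]
    · simp [Matrix.map_apply, hA', one_div]
    · rcases eq_or_ne i j with h | h <;>
        simp [Matrix.map_apply, Matrix.one_apply, h, one_div]
  have hsub : lam • (1 : Matrix (Fin N ⊕ Fin N) (Fin N ⊕ Fin N) ℂ)
        - Matrix.fromBlocks 0 1 (((ε : ℂ))⁻¹ • A') (((ε : ℂ))⁻¹ • 1)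
      = Matrix.fromBlocks (lam • 1) (-1) (-(((ε : ℂ))⁻¹ • A'))
          ((lam - (ε : ℂ)⁻¹) • 1) := by
    rw [← Matrix.fromBlocks_one, Matrix.fromBlocks_smul]
    ext (i | i) (j | j) <;> simp [sub_smul]
  have hne : lam ≠ 0 ∨ lam - (ε : ℂ)⁻¹ ≠ 0 := by
    by_contra hc
    push_neg at hc
    rw [hc.1, zero_sub, neg_eq_zero, inv_eq_zero] at hc
    exact hε' hc.2
  simp only [Polynomial.IsRoot, eval_charpoly_aux, hmap, hsub]
  rw [det_blocks_aux _ _ _ hne]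
  have hfactor : (lam * (lam - (ε : ℂ)⁻¹)) • (1 : Matrix (Fin N) (Fin N) ℂ)
        + -((ε : ℂ)⁻¹ • A')
      = (ε : ℂ)⁻¹ • ((lam * ((ε : ℂ) * lam - 1)) • (1 : Matrix (Fin N) (Fin N) ℂ) - A') := by
    have h2 : lam * (lam - (ε : ℂ)⁻¹) = (ε : ℂ)⁻¹ * (lam * ((ε : ℂ) * lam - 1)) := by
      have h3 : (ε : ℂ)⁻¹ * (ε : ℂ) = 1 := inv_mul_cancel₀ hε'
      have := congrArg (· * (lam * lam)) h3
      field_simp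
    rw [smul_sub, smul_smul, ← h2, ← sub_eq_add_neg]
  rw [hfactor, det_smul]
  have hpow : ((ε : ℂ)⁻¹) ^ Fintype.card (Fin N ⊕ Fin N) ≠ 0 :=
    pow_ne_zero _ (inv_ne_zero hε')
  constructor
  · intro h
    rcases mul_eq_zero.mp h with h | h
    · exact absurd h (pow_ne_zero _ (inv_ne_zero hε'))
    · exact h
  · intro h
    rw [h, mul_zero]
end

section
/- Let μ ∈ ℝ and ε > 0 with 1 + 4εμ > 0, and set λ_ε := (1 − √(1+4εμ))/(2ε). Then |λ_ε| ≤ √(|μ|/ε), −λ_ε ≤ μ, and if additionally μ ≥ K for some K ≤ 0 and 4ε|K| ≤ 1/2, then λ_ε ≤ −2K. -/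
/-- Estimates for the smaller root `λ_ε = (1 − √(1+4εμ))/(2ε)` of `−ελ² + λ + μ`:
`|λ_ε| ≤ √(|μ|/ε)`, `−λ_ε ≤ μ`, and if `μ ≥ K` with `K ≤ 0` and `4ε|K| ≤ 1/2` then
`λ_ε ≤ −2K`. -/
theorem stmt6 (μ ε : ℝ) (hε : 0 < ε) (hpos : 0 < 1 + 4 * ε * μ)
    (lam : ℝ) (hlam : lam = (1 - Real.sqrt (1 + 4 * ε * μ)) / (2 * ε)) :
    |lam| ≤ Real.sqrt (|μ| / ε) ∧ -lam ≤ μ ∧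
      ∀ K : ℝ, K ≤ 0 → μ ≥ K → 4 * ε * |K| ≤ 1 / 2 → lam ≤ -2 * K := by
  set s := Real.sqrt (1 + 4 * ε * μ) with hs
  have hs0 : 0 ≤ s := Real.sqrt_nonneg _
  have hs2 : s ^ 2 = 1 + 4 * ε * μ := Real.sq_sqrt hpos.le
  have h12 : 0 < 1 + 2 * ε * μ := by nlinarith
  have hsle : s ≤ 1 + 2 * ε * μ := by
    have h := Real.sqrt_le_sqrt (show 1 + 4 * ε * μ ≤ (1 + 2 * ε * μ) ^ 2 by
      nlinarith [sq_nonneg (2 * ε * μ)])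
    rwa [Real.sqrt_sq h12.le] at h
  refine ⟨?_, ?_, ?_⟩
  · have key : (1 - s) ^ 2 ≤ 4 * ε * |μ| := by
      rcases le_or_gt 0 μ with h2 | h2
      · have hεμ : 0 ≤ ε * μ := mul_nonneg hε.le h2
        have hs1 : 1 ≤ s := by nlinarith
        rw [abs_of_nonneg h2]; nlinarith
      · have hεμ : ε * μ ≤ 0 := mul_nonpos_of_nonneg_of_nonpos hε.le h2.le
        have hs1 : s ≤ 1 := by nlinarith [sq_nonneg (s - 1)]
        rw [abs_of_neg h2]; nlinarith
    rw [← Real.sqrt_sq_eq_abs]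
    apply Real.sqrt_le_sqrt
    rw [hlam, div_pow, div_le_div_iff₀ (by positivity) hε]
    nlinarith
  · rw [hlam, ← neg_div, div_le_iff₀ (by positivity)]
    nlinarith
  · intro K hK0 hKμ hKε
    rw [abs_of_nonpos hK0] at hKε
    have hεK : ε * K ≤ 0 := mul_nonpos_of_nonneg_of_nonpos hε.le hK0
    have ha0 : (0:ℝ) ≤ 1 + 4 * ε * K := by nlinarith
    have ha1 : 1 + 4 * ε * K ≤ 1 := by nlinarith
    have h1 : 1 + 4 * ε * K ≤ Real.sqrt (1 + 4 * ε * K) := by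
      rw [Real.le_sqrt ha0]
      · nlinarith [mul_nonneg ha0 (show (0:ℝ) ≤ 1 - (1 + 4 * ε * K) by linarith)]
      · exact ha0
    have h2 : Real.sqrt (1 + 4 * ε * K) ≤ s := Real.sqrt_le_sqrt (by nlinarith)
    rw [hlam, div_le_iff₀ (by positivity)]
    nlinarith
end

section
/- Let K ≤ 0, T > 0, μ ≥ K, and f ∈ L²(0,T) real-valued. Then sup_{t ∈ [0,T]} (1+|μ|) |∫₀^t e^{μ(s−t)} f(s) ds|² ≤ (1−K)(T+1) e^{−2KT} ∫₀^T |f(s)|² ds. -/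
open MeasureTheory

lemma cs_helper {α : Type*} {m : MeasurableSpace α} (μ : Measure α) (f g : α → ℝ)
    (hf : MemLp f 2 μ) (hg : MemLp g 2 μ) :
    (∫ a, f a * g a ∂μ) ^ 2 ≤ (∫ a, f a ^ 2 ∂μ) * (∫ a, g a ^ 2 ∂μ) := by
  have h2 : Real.HolderConjugate 2 2 := by constructor <;> norm_num
  have hH := integral_mul_le_Lp_mul_Lq_of_nonneg (μ := μ) h2
    (f := fun a => |f a|) (g := fun a => |g a|)
    (Filter.Eventually.of_forall fun a => abs_nonneg _)
    (Filter.Eventually.of_forall fun a => abs_nonneg _)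
    (by simpa [Real.norm_eq_abs, ENNReal.ofReal_ofNat] using hf.norm)
    (by simpa [Real.norm_eq_abs, ENNReal.ofReal_ofNat] using hg.norm)
  have habs : |∫ a, f a * g a ∂μ| ≤ ∫ a, |f a| * |g a| ∂μ := by
    calc |∫ a, f a * g a ∂μ| ≤ ∫ a, ‖f a * g a‖ ∂μ := by
          simpa [Real.norm_eq_abs] using norm_integral_le_integral_norm (fun a => f a * g a)
      _ = ∫ a, |f a| * |g a| ∂μ := by simp [Real.norm_eq_abs, abs_mul]
  have hfeq : ∫ a, |f a| ^ (2:ℝ) ∂μ = ∫ a, f a ^ 2 ∂μ := by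
    refine integral_congr_ae (Filter.Eventually.of_forall fun a => ?_)
    beta_reduce
    rw [show ((2:ℝ) : ℝ) = ((2:ℕ):ℝ) by norm_num, Real.rpow_natCast, sq_abs]
  have hgeq : ∫ a, |g a| ^ (2:ℝ) ∂μ = ∫ a, g a ^ 2 ∂μ := by
    refine integral_congr_ae (Filter.Eventually.of_forall fun a => ?_)
    beta_reduce
    rw [show ((2:ℝ) : ℝ) = ((2:ℕ):ℝ) by norm_num, Real.rpow_natCast, sq_abs]
  rw [hfeq, hgeq] at hH
  have hf2 : 0 ≤ ∫ a, f a ^ 2 ∂μ := integral_nonneg fun a => sq_nonneg _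
  have hg2 : 0 ≤ ∫ a, g a ^ 2 ∂μ := integral_nonneg fun a => sq_nonneg _
  calc (∫ a, f a * g a ∂μ) ^ 2 = |∫ a, f a * g a ∂μ| ^ 2 := (sq_abs _).symm
    _ ≤ ((∫ a, f a ^ 2 ∂μ) ^ (1/(2:ℝ)) * (∫ a, g a ^ 2 ∂μ) ^ (1/(2:ℝ))) ^ 2 := by
        apply pow_le_pow_left₀ (abs_nonneg _) (habs.trans hH)
    _ = (∫ a, f a ^ 2 ∂μ) * (∫ a, g a ^ 2 ∂μ) := by
        rw [mul_pow, ← Real.rpow_natCast (_ ^ (1/(2:ℝ))) 2, ← Real.rpow_natCast (_ ^ (1/(2:ℝ))) 2,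
          ← Real.rpow_mul hf2, ← Real.rpow_mul hg2]
        norm_num

/-- Estimate (firstdominant), scalar form: for `K ≤ 0`, `T > 0`, `μ ≥ K` and
`f ∈ L²(0,T)`,
`sup_{t∈[0,T]} (1+|μ|)|∫₀^t e^{μ(s−t)} f(s) ds|² ≤ (1−K)(T+1)e^{−2KT}∫₀^T |f|²`. -/
theorem stmt10 (K μ T : ℝ) (hK : K ≤ 0) (hT : 0 < T) (hμ : K ≤ μ)
    (f : ℝ → ℝ) (hf : IntegrableOn (fun s => f s ^ 2) (Set.Ioc 0 T) volume) :
    ∀ t ∈ Set.Icc (0 : ℝ) T,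
      (1 + |μ|) * |∫ s in (0 : ℝ)..t, Real.exp (μ * (s - t)) * f s| ^ 2 ≤
        (1 - K) * (T + 1) * Real.exp (-2 * K * T) * ∫ s in (0 : ℝ)..T, |f s| ^ 2 := by
  rintro t ⟨ht0, htT⟩
  set g : ℝ → ℝ := fun s => Real.exp (μ * (s - t)) with hg_def
  have hgcont : Continuous g := by fun_prop
  have hE1 : (1:ℝ) ≤ Real.exp (-2 * K * T) := by
    rw [← Real.exp_zero]
    exact Real.exp_le_exp.mpr (by nlinarith)
  have hRHST : (∫ s in (0:ℝ)..T, |f s| ^ 2) = ∫ s in Set.Ioc 0 T, f s ^ 2 := by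
    rw [intervalIntegral.integral_of_le hT.le]
    exact integral_congr_ae (Filter.Eventually.of_forall fun s => sq_abs _)
  have hC : (0:ℝ) ≤ ∫ s in Set.Ioc 0 T, f s ^ 2 :=
    integral_nonneg fun s => sq_nonneg _
  by_cases hint : IntervalIntegrable (fun s => g s * f s) volume 0 t
  · -- integrable case
    have hIoc : IntegrableOn (fun s => g s * f s) (Set.Ioc 0 t) volume :=
      (intervalIntegrable_iff_integrableOn_Ioc_of_le ht0).mp hint
    have hmf : AEStronglyMeasurable f (volume.restrict (Set.Ioc 0 t)) := by
      have : AEStronglyMeasurable (fun s => (g s)⁻¹ * (g s * f s))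
          (volume.restrict (Set.Ioc 0 t)) :=
        ((hgcont.inv₀ fun s => Real.exp_ne_zero _).aestronglyMeasurable).mul
          hIoc.aestronglyMeasurable
      refine this.congr (Filter.Eventually.of_forall fun s => ?_)
      field_simp [hg_def, Real.exp_ne_zero]
    have hf2t : IntegrableOn (fun s => f s ^ 2) (Set.Ioc 0 t) volume :=
      hf.mono_set (Set.Ioc_subset_Ioc_right htT)
    have hg2t : IntegrableOn (fun s => g s ^ 2) (Set.Ioc 0 t) volume :=
      (hgcont.pow 2).integrableOn_Ioc
    have hmemf : MemLp f 2 (volume.restrict (Set.Ioc 0 t)) :=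
      (memLp_two_iff_integrable_sq hmf).mpr hf2t
    have hmemg : MemLp g 2 (volume.restrict (Set.Ioc 0 t)) :=
      (memLp_two_iff_integrable_sq hgcont.aestronglyMeasurable).mpr hg2t
    have hCS : (∫ s in Set.Ioc 0 t, g s * f s) ^ 2 ≤
        (∫ s in Set.Ioc 0 t, g s ^ 2) * (∫ s in Set.Ioc 0 t, f s ^ 2) :=
      cs_helper _ g f hmemg hmemf
    have hLHS : |∫ s in (0:ℝ)..t, Real.exp (μ * (s - t)) * f s| ^ 2 =
        (∫ s in Set.Ioc 0 t, g s * f s) ^ 2 := by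
      rw [sq_abs, intervalIntegral.integral_of_le ht0]
    have hB : (0:ℝ) ≤ ∫ s in Set.Ioc 0 t, f s ^ 2 := integral_nonneg fun s => sq_nonneg _
    have hA : (0:ℝ) ≤ ∫ s in Set.Ioc 0 t, g s ^ 2 := integral_nonneg fun s => sq_nonneg _
    have hBC : (∫ s in Set.Ioc 0 t, f s ^ 2) ≤ ∫ s in Set.Ioc 0 T, f s ^ 2 :=
      setIntegral_mono_set hf (Filter.Eventually.of_forall fun s => sq_nonneg _)
        (HasSubset.Subset.eventuallyLE (Set.Ioc_subset_Ioc_right htT))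
    have hmeas : (volume (Set.Ioc (0:ℝ) t)).toReal = t := by
      simp [Real.volume_Ioc, ht0]
    rw [hLHS, hRHST]
    by_cases hcase : μ ≤ -K
    · -- |μ| ≤ -K : pointwise bound g² ≤ exp(-2KT)
      have habsμ : |μ| ≤ -K := abs_le.mpr ⟨by linarith, hcase⟩
      have hptw : ∀ s ∈ Set.Ioc (0:ℝ) t, g s ^ 2 ≤ Real.exp (-2 * K * T) := by
        intro s hs
        rw [hg_def]
        beta_reduce
        rw [← Real.exp_nat_mul]
        refine Real.exp_le_exp.mpr ?_
        push_cast
        have h1 : μ * (s - t) ≤ |μ| * t := by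
          calc μ * (s - t) ≤ |μ * (s - t)| := le_abs_self _
            _ = |μ| * |s - t| := abs_mul _ _
            _ ≤ |μ| * t := by
                refine mul_le_mul_of_nonneg_left ?_ (abs_nonneg _)
                rw [abs_sub_comm, abs_of_nonneg (by linarith [hs.1.le, hs.2] : (0:ℝ) ≤ t - s)]
                linarith [hs.1.le]
        have h2 : |μ| * t ≤ -K * t := mul_le_mul_of_nonneg_right habsμ ht0
        have h3 : -K * t ≤ -K * T := mul_le_mul_of_nonneg_left htT (by linarith)
        linarith
      have hAbound : (∫ s in Set.Ioc 0 t, g s ^ 2) ≤ Real.exp (-2 * K * T) * t := by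
        calc (∫ s in Set.Ioc 0 t, g s ^ 2)
            ≤ ∫ _ in Set.Ioc 0 t, Real.exp (-2 * K * T) := by
              refine setIntegral_mono_on hg2t ((integrableOn_const_iff).mpr (Or.inr ?_))
                measurableSet_Ioc hptw
              simp [Real.volume_Ioc]
          _ = Real.exp (-2 * K * T) * t := by
              rw [setIntegral_const, measureReal_def, hmeas, smul_eq_mul, mul_comm]
      have h1μ : 1 + |μ| ≤ 1 - K := by linarith
      calc (1 + |μ|) * (∫ s in Set.Ioc 0 t, g s * f s) ^ 2
          ≤ (1 - K) * (∫ s in Set.Ioc 0 t, g s * f s) ^ 2 :=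
            mul_le_mul_of_nonneg_right h1μ (sq_nonneg _)
        _ ≤ (1 - K) * ((Real.exp (-2 * K * T) * t) * ∫ s in Set.Ioc 0 T, f s ^ 2) := by
            refine mul_le_mul_of_nonneg_left ?_ (by linarith)
            calc (∫ s in Set.Ioc 0 t, g s * f s) ^ 2
                ≤ (∫ s in Set.Ioc 0 t, g s ^ 2) * (∫ s in Set.Ioc 0 t, f s ^ 2) := hCS
              _ ≤ (Real.exp (-2 * K * T) * t) * ∫ s in Set.Ioc 0 T, f s ^ 2 :=
                  mul_le_mul hAbound hBC hB (mul_nonneg (Real.exp_nonneg _) ht0)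
        _ ≤ (1 - K) * (T + 1) * Real.exp (-2 * K * T) * ∫ s in Set.Ioc 0 T, f s ^ 2 := by
            nlinarith [mul_nonneg (mul_nonneg (show (0:ℝ) ≤ 1 - K by linarith)
              (Real.exp_nonneg (-2 * K * T))) hC, htT, hT]
    · -- μ > -K ≥ 0, so μ > 0
      push_neg at hcase
      have hμ0 : 0 < μ := lt_of_le_of_lt (by linarith) hcase
      have hAt : (∫ s in Set.Ioc 0 t, g s ^ 2) ≤ t := by
        calc (∫ s in Set.Ioc 0 t, g s ^ 2) ≤ ∫ _ in Set.Ioc 0 t, (1:ℝ) := by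
              refine setIntegral_mono_on hg2t ((integrableOn_const_iff).mpr (Or.inr ?_))
                measurableSet_Ioc ?_
              · simp [Real.volume_Ioc]
              · intro s hs
                rw [hg_def]
                beta_reduce
                rw [← Real.exp_nat_mul, Real.exp_le_one_iff]
                push_cast
                nlinarith [mul_nonneg hμ0.le (sub_nonneg.mpr hs.2)]
          _ = t := by rw [setIntegral_const, measureReal_def, hmeas, smul_eq_mul, mul_one]
      -- exact integral bound : ∫ g² ≤ 1/(2μ)
      have heq : (∫ s in Set.Ioc 0 t, g s ^ 2) = ∫ s in (0:ℝ)..t, Real.exp (2*μ*(s-t)) := by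
        rw [intervalIntegral.integral_of_le ht0]
        refine integral_congr_ae (Filter.Eventually.of_forall fun s => ?_)
        rw [hg_def]
        beta_reduce
        rw [← Real.exp_nat_mul]
        push_cast
        ring_nf
      have hderiv : ∀ x ∈ Set.uIcc (0:ℝ) t,
          HasDerivAt (fun x => Real.exp (2*μ*(x-t)) / (2*μ)) (Real.exp (2*μ*(x-t))) x := by
        intro x _
        have h1 : HasDerivAt (fun x : ℝ => 2*μ*(x-t)) (2*μ) x := by
          simpa using ((hasDerivAt_id x).sub_const t).const_mul (2*μ)
        have h2 := (Real.hasDerivAt_exp (2*μ*(x-t))).comp x h1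
        have h3 := h2.div_const (2*μ)
        simpa [mul_div_assoc, mul_div_cancel_right₀ _ (by positivity : (2:ℝ)*μ ≠ 0)] using h3
      have hFTC : (∫ s in (0:ℝ)..t, Real.exp (2*μ*(s-t)))
          = Real.exp (2*μ*(t-t)) / (2*μ) - Real.exp (2*μ*(0-t)) / (2*μ) :=
        intervalIntegral.integral_eq_sub_of_hasDerivAt hderiv
          (Continuous.intervalIntegrable (by fun_prop) 0 t)
      have hA2 : (∫ s in Set.Ioc 0 t, g s ^ 2) ≤ 1 / (2*μ) := by
        rw [heq, hFTC]
        have : (0:ℝ) ≤ Real.exp (2*μ*(0-t)) / (2*μ) := by positivity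
        simp only [sub_self, mul_zero, Real.exp_zero]
        linarith
      have hμA : μ * (∫ s in Set.Ioc 0 t, g s ^ 2) ≤ 1/2 := by
        have := mul_le_mul_of_nonneg_left hA2 hμ0.le
        calc μ * (∫ s in Set.Ioc 0 t, g s ^ 2) ≤ μ * (1 / (2*μ)) := this
          _ = 1/2 := by field_simp
      have habsμ : |μ| = μ := abs_of_pos hμ0
      have h1KE : (1:ℝ) ≤ (1 - K) * Real.exp (-2 * K * T) := by nlinarith
      calc (1 + |μ|) * (∫ s in Set.Ioc 0 t, g s * f s) ^ 2
          ≤ (1 + μ) * ((∫ s in Set.Ioc 0 t, g s ^ 2) * (∫ s in Set.Ioc 0 t, f s ^ 2)) := by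
            rw [habsμ]
            exact mul_le_mul_of_nonneg_left hCS (by linarith)
        _ ≤ (T + 1) * ∫ s in Set.Ioc 0 T, f s ^ 2 := by
            have e1 : (∫ s in Set.Ioc 0 t, g s ^ 2) * (∫ s in Set.Ioc 0 t, f s ^ 2)
                ≤ t * (∫ s in Set.Ioc 0 t, f s ^ 2) :=
              mul_le_mul_of_nonneg_right hAt hB
            have e2 : μ * ((∫ s in Set.Ioc 0 t, g s ^ 2) * (∫ s in Set.Ioc 0 t, f s ^ 2))
                ≤ (1/2) * (∫ s in Set.Ioc 0 t, f s ^ 2) := by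
              rw [← mul_assoc]
              exact mul_le_mul_of_nonneg_right hμA hB
            have e3 : (t + 1/2) * (∫ s in Set.Ioc 0 t, f s ^ 2)
                ≤ (T + 1) * ∫ s in Set.Ioc 0 T, f s ^ 2 :=
              mul_le_mul (by linarith) hBC hB (by linarith)
            nlinarith
        _ ≤ (1 - K) * (T + 1) * Real.exp (-2 * K * T) * ∫ s in Set.Ioc 0 T, f s ^ 2 := by
            nlinarith [mul_nonneg (show (0:ℝ) ≤ T + 1 by linarith) hC]
  · -- non-integrable: interval integral is 0
    rw [intervalIntegral.integral_undef hint, hRHST]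
    have : (0:ℝ) ≤ (1 - K) * (T + 1) * Real.exp (-2 * K * T) :=
      mul_nonneg (mul_nonneg (by linarith) (by linarith)) (Real.exp_nonneg _)
    simpa using mul_nonneg this hC
end

section
/- Let ε > 0, μ_ε ≥ 1/(2ε), and let g : (0,∞) → ℝ be measurable with ∫₀^∞ e^{−s/(2ε)} |g(s)|² ds < ∞. Define x̄(t) := e^{μ_ε t} ∫_t^∞ e^{−μ_ε s} g(s) ds. Then ∫₀^∞ e^{−t/ε} |x̄(t)|² dt ≤ (2ε/μ_ε) ∫₀^∞ e^{−s/(2ε)} |g(s)|² ds. -/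
open MeasureTheory ENNReal

lemma myint_exp (c t : ℝ) (hc : 0 < c) :
    ∫ s in Set.Ioi t, Real.exp (-c * s) = Real.exp (-c * t) / c := by
  have h := integral_Ioi_of_hasDerivAt_of_tendsto
    (f := fun x => -Real.exp (-c * x) / c) (f' := fun x => Real.exp (-c * x)) (a := t) (m := 0)
    ?_ ?_ (exp_neg_integrableOn_Ioi t hc) ?_
  · rw [h]; ring
  · exact (by fun_prop : Continuous fun x : ℝ => -Real.exp (-c * x) / c).continuousWithinAt
  · intro x _
    have hd : HasDerivAt (fun x => -Real.exp (-c * x) / c)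
        (-(Real.exp (-c * x) * (-c * 1)) / c) x :=
      ((((hasDerivAt_id x).const_mul (-c)).exp).neg).div_const c
    refine hd.congr_deriv ?_
    rw [mul_one, mul_neg, neg_neg, mul_div_assoc, div_self hc.ne', mul_one]
  · have : Filter.Tendsto (fun x : ℝ => Real.exp (-c * x)) Filter.atTop (nhds 0) := by
      simpa using Real.tendsto_exp_comp_nhds_zero.mpr
        (Filter.Tendsto.const_mul_atTop_of_neg (neg_neg_iff_pos.mpr hc) Filter.tendsto_id)
    have := ((this.neg).div_const c)
    simpa using this

lemma mylint_exp (c t : ℝ) (hc : 0 < c) :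
    ∫⁻ s in Set.Ioi t, ENNReal.ofReal (Real.exp (-c * s)) =
      ENNReal.ofReal (Real.exp (-c * t) / c) := by
  rw [← ofReal_integral_eq_lintegral_ofReal (exp_neg_integrableOn_Ioi t hc)
      (Filter.Eventually.of_forall fun s => (Real.exp_pos _).le), myint_exp c t hc]

lemma sq_half (y : ℝ≥0∞) : (y ^ ((1:ℝ)/2)) ^ 2 = y := by
  rw [← ENNReal.rpow_natCast (y ^ ((1:ℝ)/2)) 2, ← ENNReal.rpow_mul]
  norm_num

/-- The particular solution `x̄(t) = e^{μ_ε t}∫_t^∞ e^{−μ_ε s} g(s) ds` of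
`x' = μ_ε x + g` has finite weighted energy:
`∫₀^∞ e^{−t/ε}|x̄(t)|² dt ≤ (2ε/μ_ε)∫₀^∞ e^{−s/(2ε)}|g(s)|² dt`. -/
theorem stmt11 (ε με : ℝ) (hε : 0 < ε) (hμε : 1 / (2 * ε) ≤ με)
    (g : ℝ → ℝ) (hmeas : Measurable g)
    (hg : ∫⁻ s in Set.Ioi (0 : ℝ),
        ENNReal.ofReal (Real.exp (-s / (2 * ε)) * g s ^ 2) < ⊤)
    (xb : ℝ → ℝ)
    (hxb : ∀ t, xb t = Real.exp (με * t) * ∫ s in Set.Ioi t, Real.exp (-με * s) * g s) :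
    ∫⁻ t in Set.Ioi (0 : ℝ), ENNReal.ofReal (Real.exp (-t / ε) * xb t ^ 2) ≤
      ENNReal.ofReal ((2 * ε / με) *
        ∫ s in Set.Ioi (0 : ℝ), Real.exp (-s / (2 * ε)) * g s ^ 2) := by
  have hμ : 0 < με := lt_of_lt_of_le (by positivity) hμε
  set r : ℝ := 2 * με - 1 / (2 * ε) with hr
  have hrμ : με ≤ r := by rw [hr]; linarith
  have hrpos : 0 < r := lt_of_lt_of_le hμ hrμ
  -- rewrite exponents
  have hdiv : ∀ s : ℝ, -s / (2 * ε) = -(1 / (2 * ε)) * s := fun s => by field_simp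
  set I : ℝ≥0∞ := ∫⁻ s in Set.Ioi (0 : ℝ),
      ENNReal.ofReal (Real.exp (-s / (2 * ε)) * g s ^ 2) with hI
  -- pointwise bound
  have key : ∀ t ∈ Set.Ioi (0:ℝ),
      ENNReal.ofReal (Real.exp (-t / ε) * xb t ^ 2) ≤
        ENNReal.ofReal (Real.exp (-(1/(2*ε)) * t) / με) * I := by
    intro t ht
    have ht0 : (0:ℝ) < t := ht
    set A : ℝ := ∫ s in Set.Ioi t, Real.exp (-με * s) * g s with hA
    -- Cauchy–Schwarz bound on |A|
    have hAbound : ENNReal.ofReal |A| ≤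
        (ENNReal.ofReal (Real.exp (-r * t) / με)) ^ ((1:ℝ)/2) * I ^ ((1:ℝ)/2) := by
      have h1 : ENNReal.ofReal |A| ≤
          ∫⁻ s in Set.Ioi t, ENNReal.ofReal |Real.exp (-με * s) * g s| := by
        rw [← Real.norm_eq_abs, ofReal_norm]
        refine (enorm_integral_le_lintegral_enorm _).trans (le_of_eq ?_)
        refine lintegral_congr fun s => ?_
        rw [← ofReal_norm, Real.norm_eq_abs]
      refine h1.trans ?_
      set f : ℝ → ℝ≥0∞ := fun s => ENNReal.ofReal (Real.exp (-(r/2) * s))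
      set h : ℝ → ℝ≥0∞ := fun s => ENNReal.ofReal (Real.exp (-(1/(4*ε)) * s) * |g s|)
      have hfh : ∀ s, ENNReal.ofReal |Real.exp (-με * s) * g s| = (f * h) s := by
        intro s
        have : |Real.exp (-με * s) * g s| = Real.exp (-(r/2) * s) *
            (Real.exp (-(1/(4*ε)) * s) * |g s|) := by
          rw [abs_mul, abs_of_pos (Real.exp_pos _), ← mul_assoc, ← Real.exp_add]
          congr 2
          rw [hr]; field_simp; ring
        simp only [f, h, Pi.mul_apply, this,
          ENNReal.ofReal_mul (Real.exp_pos _).le]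
      have hCS := ENNReal.lintegral_mul_le_Lp_mul_Lq
          (volume.restrict (Set.Ioi t)) (p := 2) (q := 2) (by constructor <;> norm_num)
          (f := f) (g := h) (by fun_prop) ?_
      · have hf2 : ∫⁻ s in Set.Ioi t, f s ^ (2:ℝ) ≤ ENNReal.ofReal (Real.exp (-r * t) / με) := by
          have : ∀ s, f s ^ (2:ℝ) = ENNReal.ofReal (Real.exp (-r * s)) := by
            intro s
            rw [ENNReal.ofReal_rpow_of_nonneg (Real.exp_pos _).le (by norm_num : (0:ℝ) ≤ 2),
              show (2:ℝ) = ((2:ℕ):ℝ) by norm_num, Real.rpow_natCast, ← Real.exp_nat_mul]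
            congr 1
            push_cast
            ring
          simp only [this]
          rw [mylint_exp r t hrpos]
          apply ENNReal.ofReal_le_ofReal
          apply div_le_div_of_nonneg_left (Real.exp_pos _).le hμ hrμ
        have hh2 : ∫⁻ s in Set.Ioi t, h s ^ (2:ℝ) ≤ I := by
          have : ∀ s, h s ^ (2:ℝ) = ENNReal.ofReal (Real.exp (-s/(2*ε)) * g s ^ 2) := by
            intro s
            rw [ENNReal.ofReal_rpow_of_nonneg (by positivity) (by norm_num : (0:ℝ) ≤ 2),
              show (2:ℝ) = ((2:ℕ):ℝ) by norm_num, Real.rpow_natCast]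
            congr 1
            rw [mul_pow, ← Real.exp_nat_mul, sq_abs]
            congr 1
            push_cast
            field_simp
            ring
          simp only [this]
          rw [hI]
          exact lintegral_mono_set (Set.Ioi_subset_Ioi ht0.le)
        calc ∫⁻ s in Set.Ioi t, ENNReal.ofReal |Real.exp (-με * s) * g s|
            = ∫⁻ s in Set.Ioi t, (f * h) s := by simp only [hfh]
          _ ≤ (∫⁻ s in Set.Ioi t, f s ^ (2:ℝ)) ^ ((1:ℝ)/2) *
              (∫⁻ s in Set.Ioi t, h s ^ (2:ℝ)) ^ ((1:ℝ)/2) := hCS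
          _ ≤ _ := by
              gcongr <;> norm_num
      · fun_prop
    -- assemble
    have hsplit : ENNReal.ofReal (Real.exp (-t / ε) * xb t ^ 2) =
        ENNReal.ofReal (Real.exp (-t/ε + 2 * με * t)) * (ENNReal.ofReal |A|) ^ 2 := by
      rw [hxb t, ← hA, mul_pow, ← mul_assoc, ← Real.exp_nat_mul, ← Real.exp_add,
        ENNReal.ofReal_mul (Real.exp_pos _).le, ← ENNReal.ofReal_pow (abs_nonneg _), sq_abs]
      norm_num
      ring_nf
    rw [hsplit]
    calc ENNReal.ofReal (Real.exp (-t/ε + 2 * με * t)) * (ENNReal.ofReal |A|) ^ 2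
        ≤ ENNReal.ofReal (Real.exp (-t/ε + 2 * με * t)) *
          ((ENNReal.ofReal (Real.exp (-r * t) / με)) ^ ((1:ℝ)/2) * I ^ ((1:ℝ)/2)) ^ 2 := by
          gcongr
      _ = ENNReal.ofReal (Real.exp (-t/ε + 2 * με * t)) *
          (ENNReal.ofReal (Real.exp (-r * t) / με) * I) := by
          rw [mul_pow, sq_half, sq_half]
      _ = ENNReal.ofReal (Real.exp (-(1/(2*ε)) * t) / με) * I := by
          rw [← mul_assoc, ← ENNReal.ofReal_mul (Real.exp_pos _).le]
          congr 2
          rw [← mul_div_assoc, ← Real.exp_add]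
          congr 2
          rw [hr]; field_simp; ring
  -- integrate the pointwise bound
  have step2 : ∫⁻ t in Set.Ioi (0:ℝ), ENNReal.ofReal (Real.exp (-t / ε) * xb t ^ 2) ≤
      ENNReal.ofReal (2 * ε / με) * I := by
    calc ∫⁻ t in Set.Ioi (0:ℝ), ENNReal.ofReal (Real.exp (-t / ε) * xb t ^ 2)
        ≤ ∫⁻ t in Set.Ioi (0:ℝ), ENNReal.ofReal (Real.exp (-(1/(2*ε)) * t) / με) * I :=
          lintegral_mono_ae ((ae_restrict_iff' measurableSet_Ioi).2
            (Filter.Eventually.of_forall key))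
      _ ≤ ENNReal.ofReal (2 * ε / με) * I := ?_
    have heq : ∀ t : ℝ, ENNReal.ofReal (Real.exp (-(1/(2*ε)) * t) / με) * I =
        ENNReal.ofReal (Real.exp (-(1/(2*ε)) * t)) * (ENNReal.ofReal (1/με) * I) := by
      intro t
      rw [← mul_assoc, ← ENNReal.ofReal_mul (Real.exp_pos _).le]
      ring_nf
    simp only [heq]
    rw [lintegral_mul_const'' _ (by fun_prop), mylint_exp (1/(2*ε)) 0 (by positivity)]
    rw [← mul_assoc, ← ENNReal.ofReal_mul (by positivity)]
    apply mul_le_mul_left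
    apply ENNReal.ofReal_le_ofReal
    apply le_of_eq
    rw [mul_zero, Real.exp_zero]
    field_simp
  refine step2.trans ?_
  -- identify I with the Bochner integral
  have hnn : (0:ℝ→ℝ) ≤ᵐ[volume.restrict (Set.Ioi (0:ℝ))]
      fun s => Real.exp (-s / (2 * ε)) * g s ^ 2 :=
    Filter.Eventually.of_forall fun s => by positivity
  have hint : Integrable (fun s => Real.exp (-s / (2 * ε)) * g s ^ 2)
      (volume.restrict (Set.Ioi (0:ℝ))) := by
    refine ⟨((Measurable.mul (by fun_prop : Measurable fun s : ℝ => Real.exp (-s / (2 * ε)))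
      (hmeas.pow_const 2)).aestronglyMeasurable), (hasFiniteIntegral_iff_ofReal hnn).2 ?_⟩
    exact hg
  rw [hI, ← ofReal_integral_eq_lintegral_ofReal hint hnn,
    ← ENNReal.ofReal_mul (by positivity)]
end

section
/- Let K ≤ 0, T > 0, and suppose μ : ℝ^N → ℝ is measurable with μ(ξ) ≥ K a.e. Let u₀ with ∫(1+|μ(ξ)|)|û₀(ξ)|² dξ < ∞ and f with ∫₀^T ∫ |f̂(s,ξ)|² dξ ds < ∞. Define û(t,ξ) := e^{−μ(ξ)t}(û₀(ξ) + ∫₀^t e^{μ(ξ)s} f̂(s,ξ) ds). Then sup_{t∈[0,T]} ∫ (1+|μ(ξ)|)|û(t,ξ)|² dξ ≤ 2(1−K)(T+1)e^{−2KT} (∫(1+|μ|)|û₀|² dξ + ∫₀^T ∫|f̂(s,ξ)|² dξ ds). -/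
open MeasureTheory Set
open scoped ENNReal

lemma ofReal_int_le {α : Type*} [MeasurableSpace α] (ν : Measure α) (h : α → ℝ)
    (hnn : 0 ≤ᵐ[ν] h) :
    ENNReal.ofReal (∫ x, h x ∂ν) ≤ ∫⁻ x, ENNReal.ofReal (h x) ∂ν := by
  by_cases hi : Integrable h ν
  · exact le_of_eq (ofReal_integral_eq_lintegral_ofReal hi hnn)
  · simp [integral_undef hi]

lemma cs_sq {α : Type*} [MeasurableSpace α] (ν : Measure α) (g h : α → ℝ≥0∞)
    (hg : AEMeasurable g ν) (hh : AEMeasurable h ν) :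
    (∫⁻ x, g x * h x ∂ν) ^ 2 ≤ (∫⁻ x, g x ^ 2 ∂ν) * (∫⁻ x, h x ^ 2 ∂ν) := by
  have hpq : Real.HolderConjugate 2 2 := Real.HolderConjugate.two_two
  have := ENNReal.lintegral_mul_le_Lp_mul_Lq ν hpq hg hh
  calc (∫⁻ x, g x * h x ∂ν) ^ 2
      ≤ ((∫⁻ x, g x ^ (2:ℝ) ∂ν) ^ (1/2:ℝ) * (∫⁻ x, h x ^ (2:ℝ) ∂ν) ^ (1/2:ℝ)) ^ 2 :=
        pow_le_pow_left' (by simpa [Pi.mul_apply] using this) 2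
    _ = (∫⁻ x, g x ^ 2 ∂ν) * (∫⁻ x, h x ^ 2 ∂ν) := by
        rw [mul_pow, ← ENNReal.rpow_natCast (_ ^ (1/2:ℝ)), ← ENNReal.rpow_natCast (_ ^ (1/2:ℝ)),
          ← ENNReal.rpow_mul, ← ENNReal.rpow_mul]
        norm_num

lemma int_exp_mul (c t : ℝ) (hc : c ≠ 0) :
    ∫ s in (0:ℝ)..t, Real.exp (c * s) = (Real.exp (c * t) - 1) / c := by
  have D : ∀ x : ℝ, HasDerivAt (fun y : ℝ => Real.exp (c * y) / c) (Real.exp (c * x)) x := by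
    intro x
    have h : HasDerivAt (fun y : ℝ => Real.exp (c * y) / c) (Real.exp (c * x) * (c * 1) / c) x :=
      (((hasDerivAt_id x).const_mul c).exp).div_const c
    convert h using 1
    field_simp
  have := intervalIntegral.integral_eq_sub_of_hasDerivAt (f := fun y : ℝ => Real.exp (c * y) / c)
    (fun x _ => D x) ((Real.continuous_exp.comp (continuous_const.mul continuous_id)).intervalIntegrable 0 t)
  simpa [sub_div] using this


lemma keyA (K T t m : ℝ) (hK : K ≤ 0) (ht0 : 0 ≤ t) (htT : t ≤ T) (hm : K ≤ m) :
    (1 + |m|) * Real.exp (-(m * t) * 2) * (∫ s in Set.Ioc (0:ℝ) t, Real.exp (2 * m * s)) ≤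
      (1 - K) * (T + 1) * Real.exp (-2 * K * T) := by
  have hE : (1:ℝ) ≤ Real.exp (-2 * K * T) := by
    rw [← Real.exp_zero]
    apply Real.exp_le_exp.2
    nlinarith
  have hInt : IntegrableOn (fun s => Real.exp (2 * m * s)) (Set.Ioc (0:ℝ) t) :=
    (Real.continuous_exp.comp (continuous_const.mul continuous_id)).integrableOn_Ioc
  have hJeq : (∫ s in Set.Ioc (0:ℝ) t, Real.exp (2 * m * s)) = ∫ s in (0:ℝ)..t, Real.exp (2 * m * s) := by
    rw [intervalIntegral.integral_of_le ht0]
  have hJnn : 0 ≤ (∫ s in Set.Ioc (0:ℝ) t, Real.exp (2 * m * s)) :=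
    setIntegral_nonneg measurableSet_Ioc (fun s _ => (Real.exp_pos _).le)
  rcases le_or_gt 0 m with hm0 | hm0
  · -- m ≥ 0
    have h1 : (∫ s in Set.Ioc (0:ℝ) t, Real.exp (2 * m * s)) ≤ t * Real.exp (m * t * 2) := by
      have : (∫ s in Set.Ioc (0:ℝ) t, Real.exp (2 * m * s)) ≤
          ∫ _s in Set.Ioc (0:ℝ) t, Real.exp (m * t * 2) := by
        apply setIntegral_mono_on hInt (integrableOn_const measure_Ioc_lt_top.ne)
          measurableSet_Ioc
        intro s hs
        exact Real.exp_le_exp.mpr (by nlinarith [hs.1, hs.2])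
      simpa [Real.volume_Ioc, ENNReal.toReal_ofReal ht0, max_eq_left ht0] using this
    have h2 : m * (∫ s in Set.Ioc (0:ℝ) t, Real.exp (2 * m * s)) * Real.exp (-(m * t) * 2) ≤ 1/2 := by
      rcases eq_or_lt_of_le hm0 with h | h
      · simp [← h]
      · have hm' : m ≠ 0 := ne_of_gt h
        have h2m : (2 * m) ≠ 0 := by positivity
        rw [hJeq, int_exp_mul _ _ h2m]
        have key2 : m * ((Real.exp (2*m*t) - 1) / (2*m)) = (Real.exp (2*m*t) - 1)/2 := by
          field_simp
        rw [key2]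
        have he : Real.exp (-(m*t)*2) * Real.exp (2*m*t) = 1 := by
          rw [← Real.exp_add]; ring_nf; exact Real.exp_zero
        have hle : Real.exp (-(m*t)*2) ≤ 1 := by
          rw [← Real.exp_zero]; exact Real.exp_le_exp.mpr (by nlinarith)
        nlinarith [Real.exp_pos (-(m*t)*2)]
    have hEt : Real.exp (-(m*t)*2) ≤ 1 := by
      rw [← Real.exp_zero]; exact Real.exp_le_exp.mpr (by nlinarith)
    have key : (1 + |m|) * Real.exp (-(m * t) * 2) * (∫ s in Set.Ioc (0:ℝ) t, Real.exp (2 * m * s)) ≤ t + 1/2 := by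
      rw [abs_of_nonneg hm0]
      have hexp_pos := Real.exp_pos (-(m*t)*2)
      have b1 : Real.exp (-(m * t) * 2) * (∫ s in Set.Ioc (0:ℝ) t, Real.exp (2 * m * s)) ≤ t := by
        calc Real.exp (-(m * t) * 2) * (∫ s in Set.Ioc (0:ℝ) t, Real.exp (2 * m * s))
            ≤ Real.exp (-(m * t) * 2) * (t * Real.exp (m * t * 2)) :=
              mul_le_mul_of_nonneg_left h1 hexp_pos.le
          _ = t * (Real.exp (-(m*t)*2) * Real.exp (m*t*2)) := by ring
          _ = t := by rw [← Real.exp_add]; ring_nf; simp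
      nlinarith [h2]
    have step1 : t + 1/2 ≤ (T+1) := by linarith
    have step2 : (T+1 : ℝ) ≤ (1-K)*(T+1) := by nlinarith
    have step3 : (1-K)*(T+1) ≤ (1-K)*(T+1)*Real.exp (-2*K*T) :=
      le_mul_of_one_le_right (by nlinarith) hE
    linarith [key]
  · -- m < 0
    have habs : 1 + |m| ≤ 1 - K := by rw [abs_of_neg hm0]; linarith
    have h1 : (∫ s in Set.Ioc (0:ℝ) t, Real.exp (2 * m * s)) ≤ t := by
      have : (∫ s in Set.Ioc (0:ℝ) t, Real.exp (2 * m * s)) ≤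
          ∫ _s in Set.Ioc (0:ℝ) t, (1:ℝ) := by
        apply setIntegral_mono_on hInt (integrableOn_const measure_Ioc_lt_top.ne)
          measurableSet_Ioc
        intro s hs
        rw [← Real.exp_zero]
        exact Real.exp_le_exp.mpr (by nlinarith [hs.1])
      simpa [Real.volume_Ioc, ENNReal.toReal_ofReal ht0, max_eq_left ht0] using this
    have hEm : Real.exp (-(m*t)*2) ≤ Real.exp (-2*K*T) := by
      exact Real.exp_le_exp.mpr (by nlinarith)
    have hexp_pos := Real.exp_pos (-(m*t)*2)
    have h0 : 0 ≤ (1-K)*Real.exp (-2*K*T) := mul_nonneg (by linarith) (Real.exp_pos _).le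
    calc (1 + |m|) * Real.exp (-(m * t) * 2) * (∫ s in Set.Ioc (0:ℝ) t, Real.exp (2 * m * s))
        ≤ (1 - K) * Real.exp (-2*K*T) * t := by
          apply mul_le_mul
          · exact mul_le_mul habs hEm hexp_pos.le (by linarith)
          · exact h1
          · exact hJnn
          · exact h0
      _ ≤ (1 - K) * Real.exp (-2*K*T) * (T+1) := by nlinarith
      _ = (1 - K) * (T+1) * Real.exp (-2*K*T) := by ring


set_option maxHeartbeats 1000000 in
lemma pointwise_bound (K T t m : ℝ) (hK : K ≤ 0) (ht0 : 0 ≤ t) (htT : t ≤ T)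
    (hm : K ≤ m) (b : ℂ) (h : ℝ → ℂ) (hmeas : Measurable h) (w : ℂ)
    (hw : w = (Real.exp (-m * t) : ℂ) * (b + ∫ s in (0:ℝ)..t, (Real.exp (m * s) : ℂ) * h s)) :
    ENNReal.ofReal ((1 + |m|) * ‖w‖ ^ 2) ≤
      ENNReal.ofReal (2 * (1 - K) * (T + 1) * Real.exp (-2 * K * T)) *
        (ENNReal.ofReal ((1 + |m|) * ‖b‖ ^ 2) +
          ∫⁻ s in Set.Ioc (0:ℝ) t, ENNReal.ofReal (‖h s‖ ^ 2)) := by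
  set C : ℝ := 2 * (1 - K) * (T + 1) * Real.exp (-2 * K * T) with hC
  set A : ℝ := ∫ s in (0:ℝ)..t, Real.exp (m * s) * ‖h s‖ with hA
  set B : ℝ := ‖b‖ with hB
  set E : ℝ := Real.exp (-m * t) with hE
  set J : ℝ := ∫ s in Set.Ioc (0:ℝ) t, Real.exp (2 * m * s) with hJ
  set F : ℝ≥0∞ := ∫⁻ s in Set.Ioc (0:ℝ) t, ENNReal.ofReal (‖h s‖ ^ 2) with hF
  have hEpos : 0 < E := Real.exp_pos _
  have hA0 : 0 ≤ A := intervalIntegral.integral_nonneg ht0 (fun s _ => by positivity)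
  have hB0 : 0 ≤ B := norm_nonneg _
  have habs : (0:ℝ) ≤ 1 + |m| := by positivity
  have hJnn : 0 ≤ J :=
    setIntegral_nonneg measurableSet_Ioc (fun s _ => (Real.exp_pos _).le)
  -- norm bound
  have hnorm : ‖w‖ ≤ E * (B + A) := by
    rw [hw, norm_mul, Complex.norm_real, Real.norm_eq_abs, abs_of_pos hEpos]
    apply mul_le_mul_of_nonneg_left _ hEpos.le
    refine (norm_add_le _ _).trans (add_le_add_right ?_ B)
    calc ‖∫ s in (0:ℝ)..t, (Real.exp (m * s) : ℂ) * h s‖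
        ≤ ∫ s in (0:ℝ)..t, ‖(Real.exp (m * s) : ℂ) * h s‖ :=
          intervalIntegral.norm_integral_le_integral_norm ht0
      _ = A := by
          rw [hA]
          apply intervalIntegral.integral_congr
          intro s _
          show ‖(Real.exp (m * s) : ℂ) * h s‖ = Real.exp (m * s) * ‖h s‖
          rw [norm_mul, Complex.norm_real, Real.norm_eq_abs, abs_of_pos (Real.exp_pos _)]
  -- exponential bound
  have hE2 : E * E ≤ Real.exp (-2 * K * T) := by
    rw [hE, ← Real.exp_add]
    exact Real.exp_le_exp.mpr (by nlinarith)
  have hE2' : E * E = Real.exp (-(m * t) * 2) := by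
    rw [hE, ← Real.exp_add]; ring_nf
  have hCfac : (1:ℝ) ≤ (1 - K) * (T + 1) := by nlinarith
  -- square and split
  have hw2 : (1 + |m|) * ‖w‖ ^ 2 ≤
      2 * Real.exp (-2 * K * T) * ((1 + |m|) * B ^ 2) + 2 * ((1 + |m|) * (E * E)) * A ^ 2 := by
    have h1 : ‖w‖ ^ 2 ≤ (E * (B + A)) ^ 2 :=
      pow_le_pow_left₀ (norm_nonneg w) hnorm 2
    have h2 : (E * (B + A)) ^ 2 ≤ 2 * (E * E) * B ^ 2 + 2 * (E * E) * A ^ 2 := by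
      nlinarith [mul_nonneg (mul_pos hEpos hEpos).le (sq_nonneg (A - B))]
    have h3 : (1 + |m|) * ‖w‖ ^ 2 ≤
        2 * ((1 + |m|) * (E * E)) * B ^ 2 + 2 * ((1 + |m|) * (E * E)) * A ^ 2 := by nlinarith
    have h4 : 2 * ((1 + |m|) * (E * E)) * B ^ 2 ≤
        2 * Real.exp (-2 * K * T) * ((1 + |m|) * B ^ 2) := by
      nlinarith [mul_le_mul_of_nonneg_left hE2 (mul_nonneg habs (sq_nonneg B))]
    linarith
  -- term 2 : Cauchy-Schwarz
  have hAle : ENNReal.ofReal A ≤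
      ∫⁻ s in Set.Ioc (0:ℝ) t, ENNReal.ofReal (Real.exp (m * s) * ‖h s‖) := by
    rw [hA, intervalIntegral.integral_of_le ht0]
    exact ofReal_int_le _ _ (Filter.Eventually.of_forall (fun s => by positivity))
  have hJl : ENNReal.ofReal J = ∫⁻ s in Set.Ioc (0:ℝ) t, ENNReal.ofReal (Real.exp (2 * m * s)) := by
    rw [hJ]
    exact ofReal_integral_eq_lintegral_ofReal
      ((Real.continuous_exp.comp (continuous_const.mul continuous_id)).integrableOn_Ioc)
      (Filter.Eventually.of_forall fun s => (Real.exp_pos _).le)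
  have hCS : (ENNReal.ofReal A) ^ 2 ≤ ENNReal.ofReal J * F := by
    calc (ENNReal.ofReal A) ^ 2
        ≤ (∫⁻ s in Set.Ioc (0:ℝ) t,
            ENNReal.ofReal (Real.exp (m * s)) * ENNReal.ofReal ‖h s‖) ^ 2 := by
          apply pow_le_pow_left' _ 2
          refine hAle.trans (le_of_eq ?_)
          exact lintegral_congr fun s => ENNReal.ofReal_mul (Real.exp_pos _).le
      _ ≤ (∫⁻ s in Set.Ioc (0:ℝ) t, ENNReal.ofReal (Real.exp (m * s)) ^ 2) *
          (∫⁻ s in Set.Ioc (0:ℝ) t, ENNReal.ofReal ‖h s‖ ^ 2) := by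
          exact cs_sq (volume.restrict (Set.Ioc (0:ℝ) t))
            (fun s => ENNReal.ofReal (Real.exp (m * s))) (fun s => ENNReal.ofReal ‖h s‖)
            ((measurable_const.mul measurable_id).exp.ennreal_ofReal).aemeasurable
            (hmeas.norm.ennreal_ofReal).aemeasurable
      _ = ENNReal.ofReal J * F := by
          rw [hJl, hF]
          congr 1
          · apply lintegral_congr
            intro s
            rw [sq, ← ENNReal.ofReal_mul (Real.exp_pos _).le, ← Real.exp_add]
            ring_nf
          · apply lintegral_congr
            intro s
            rw [sq, ← ENNReal.ofReal_mul (norm_nonneg _), ← sq]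
  have term2 : ENNReal.ofReal (2 * ((1 + |m|) * (E * E)) * A ^ 2) ≤ ENNReal.ofReal C * F := by
    have e1 : ENNReal.ofReal (2 * ((1 + |m|) * (E * E)) * A ^ 2)
        = ENNReal.ofReal (2 * ((1 + |m|) * (E * E))) * ENNReal.ofReal A ^ 2 := by
      rw [ENNReal.ofReal_mul (show (0:ℝ) ≤ 2 * ((1 + |m|) * (E * E)) by positivity),
        ENNReal.ofReal_pow hA0]
    rw [e1]
    calc ENNReal.ofReal (2 * ((1 + |m|) * (E * E))) * ENNReal.ofReal A ^ 2
        ≤ ENNReal.ofReal (2 * ((1 + |m|) * (E * E))) * (ENNReal.ofReal J * F) :=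
          mul_le_mul_right hCS _
      _ = ENNReal.ofReal (2 * ((1 + |m|) * (E * E)) * J) * F := by
          rw [ENNReal.ofReal_mul (show (0:ℝ) ≤ 2 * ((1 + |m|) * (E * E)) by positivity), mul_assoc]
      _ ≤ ENNReal.ofReal C * F := by
          apply mul_le_mul_left
          apply ENNReal.ofReal_le_ofReal
          have hk := keyA K T t m hK ht0 htT hm
          rw [hC]
          calc 2 * ((1 + |m|) * (E * E)) * J
              = 2 * ((1 + |m|) * Real.exp (-(m * t) * 2) * J) := by rw [hE2']; ring
            _ ≤ 2 * ((1 - K) * (T + 1) * Real.exp (-2 * K * T)) := by linarith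
            _ = 2 * (1 - K) * (T + 1) * Real.exp (-2 * K * T) := by ring
  have term1 : ENNReal.ofReal (2 * Real.exp (-2 * K * T) * ((1 + |m|) * B ^ 2)) ≤
      ENNReal.ofReal C * ENNReal.ofReal ((1 + |m|) * B ^ 2) := by
    rw [ENNReal.ofReal_mul (show (0:ℝ) ≤ 2 * Real.exp (-2 * K * T) by positivity)]
    apply mul_le_mul_left
    apply ENNReal.ofReal_le_ofReal
    nlinarith [Real.exp_pos (-2 * K * T)]
  calc ENNReal.ofReal ((1 + |m|) * ‖w‖ ^ 2)
      ≤ ENNReal.ofReal (2 * Real.exp (-2 * K * T) * ((1 + |m|) * B ^ 2))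
        + ENNReal.ofReal (2 * ((1 + |m|) * (E * E)) * A ^ 2) :=
        (ENNReal.ofReal_le_ofReal hw2).trans ENNReal.ofReal_add_le
    _ ≤ ENNReal.ofReal C * ENNReal.ofReal ((1 + |m|) * B ^ 2) + ENNReal.ofReal C * F :=
        add_le_add term1 term2
    _ = ENNReal.ofReal C * (ENNReal.ofReal ((1 + |m|) * B ^ 2) + F) := by rw [mul_add]

set_option maxHeartbeats 1000000 in
/-- A priori `V_𝓛` estimate on the Fourier side: if the symbol `μ ≥ K` a.e. with
`K ≤ 0`, `û₀` has finite `V_𝓛` norm and `f̂ ∈ L²((0,T)×ℝ^N)`, then the solution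
`û(t,ξ) = e^{−μ(ξ)t}(û₀(ξ) + ∫₀^t e^{μ(ξ)s} f̂(s,ξ) ds)` satisfies
`sup_{t∈[0,T]} ∫ (1+|μ|)|û(t)|² ≤ 2(1−K)(T+1)e^{−2KT}(∫(1+|μ|)|û₀|² + ∫₀^T∫|f̂|²)`. -/
theorem stmt15 (N : ℕ) (K T : ℝ) (hK : K ≤ 0) (hT : 0 < T)
    (μ : (Fin N → ℝ) → ℝ) (hμmeas : Measurable μ)
    (hμK : ∀ᵐ ξ : Fin N → ℝ, K ≤ μ ξ)
    (u₀ : (Fin N → ℝ) → ℂ) (hu₀meas : Measurable u₀)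
    (f : ℝ → (Fin N → ℝ) → ℂ) (hfmeas : Measurable (Function.uncurry f))
    (hu₀ : ∫⁻ ξ, ENNReal.ofReal ((1 + |μ ξ|) * ‖u₀ ξ‖ ^ 2) < ⊤)
    (hf : ∫⁻ s in Set.Ioc (0 : ℝ) T, ∫⁻ ξ, ENNReal.ofReal (‖f s ξ‖ ^ 2) < ⊤)
    (u : ℝ → (Fin N → ℝ) → ℂ)
    (hu : ∀ t ξ, u t ξ = Real.exp (-μ ξ * t) *
        (u₀ ξ + ∫ s in (0 : ℝ)..t, (Real.exp (μ ξ * s) : ℂ) * f s ξ)) :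
    ∀ t ∈ Set.Icc (0 : ℝ) T,
      ∫⁻ ξ, ENNReal.ofReal ((1 + |μ ξ|) * ‖u t ξ‖ ^ 2) ≤
        ENNReal.ofReal (2 * (1 - K) * (T + 1) * Real.exp (-2 * K * T)) *
          ((∫⁻ ξ, ENNReal.ofReal ((1 + |μ ξ|) * ‖u₀ ξ‖ ^ 2)) +
            ∫⁻ s in Set.Ioc (0 : ℝ) T, ∫⁻ ξ, ENNReal.ofReal (‖f s ξ‖ ^ 2)) := by
  intro t ht
  obtain ⟨ht0, htT⟩ := ht
  set C' : ℝ≥0∞ := ENNReal.ofReal (2 * (1 - K) * (T + 1) * Real.exp (-2 * K * T)) with hC'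
  have hmx : Measurable fun ξ : Fin N → ℝ => ENNReal.ofReal ((1 + |μ ξ|) * ‖u₀ ξ‖ ^ 2) :=
    ((measurable_const.add hμmeas.abs).mul (hu₀meas.norm.pow_const 2)).ennreal_ofReal
  have hptwise : ∀ᵐ ξ : Fin N → ℝ,
      ENNReal.ofReal ((1 + |μ ξ|) * ‖u t ξ‖ ^ 2) ≤
        C' * (ENNReal.ofReal ((1 + |μ ξ|) * ‖u₀ ξ‖ ^ 2) +
          ∫⁻ s in Set.Ioc (0 : ℝ) t, ENNReal.ofReal (‖f s ξ‖ ^ 2)) := by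
    filter_upwards [hμK] with ξ hξ
    exact pointwise_bound K T t (μ ξ) hK ht0 htT hξ (u₀ ξ) (fun s => f s ξ)
      (hfmeas.comp (measurable_id.prodMk measurable_const)) (u t ξ) (hu t ξ)
  have hswap : (∫⁻ ξ, ∫⁻ s in Set.Ioc (0 : ℝ) t, ENNReal.ofReal (‖f s ξ‖ ^ 2)) =
      ∫⁻ s in Set.Ioc (0 : ℝ) t, ∫⁻ ξ, ENNReal.ofReal (‖f s ξ‖ ^ 2) := by
    apply lintegral_lintegral_swap
    exact (((hfmeas.comp measurable_swap).norm.pow_const 2).ennreal_ofReal).aemeasurable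
  calc ∫⁻ ξ, ENNReal.ofReal ((1 + |μ ξ|) * ‖u t ξ‖ ^ 2)
      ≤ ∫⁻ ξ, C' * (ENNReal.ofReal ((1 + |μ ξ|) * ‖u₀ ξ‖ ^ 2) +
          ∫⁻ s in Set.Ioc (0 : ℝ) t, ENNReal.ofReal (‖f s ξ‖ ^ 2)) :=
        lintegral_mono_ae hptwise
    _ = C' * ((∫⁻ ξ, ENNReal.ofReal ((1 + |μ ξ|) * ‖u₀ ξ‖ ^ 2)) +
          ∫⁻ ξ, ∫⁻ s in Set.Ioc (0 : ℝ) t, ENNReal.ofReal (‖f s ξ‖ ^ 2)) := by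
        rw [lintegral_const_mul' _ _ ENNReal.ofReal_ne_top, lintegral_add_left hmx]
    _ ≤ C' * ((∫⁻ ξ, ENNReal.ofReal ((1 + |μ ξ|) * ‖u₀ ξ‖ ^ 2)) +
          ∫⁻ s in Set.Ioc (0 : ℝ) T, ∫⁻ ξ, ENNReal.ofReal (‖f s ξ‖ ^ 2)) := by
        apply mul_le_mul_right
        apply add_le_add_right
        rw [hswap]
        exact lintegral_mono_set (Set.Ioc_subset_Ioc_right htT)
end

section
/- Let ε > 0, μ ∈ ℝ with 1+4εμ ≥ 1/2, Z := √(1+4εμ), λ_ε := (1−Z)/(2ε), μ_ε := (1+Z)/(2ε), and let f̂ : (0,∞) → ℝ satisfy ∫₀^∞ e^{−s/(2ε)}|f̂(s)|² ds < ∞. A solution v of −εv'' + v' + μv = f̂ (in the general-solution form with constants c₁, c₂) satisfies ∫₀^∞ e^{−t/ε}|v(t)|² dt < ∞ only if c₂ = (1/Z) ∫₀^∞ e^{−μ_ε s} f̂(s) ds. -/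
open MeasureTheory Set

lemma expAMGM (p q x : ℝ) :
    Real.exp (p + q) * |x| ≤ (Real.exp (2*p) * x^2 + Real.exp (2*q)) / 2 := by
  have h := two_mul_le_add_sq (Real.exp p * |x|) (Real.exp q)
  have e1 : (Real.exp p * |x|)^2 = Real.exp (2*p) * x^2 := by
    rw [mul_pow, sq_abs, pow_two, ← Real.exp_add, ← two_mul]
  have e2 : Real.exp q ^ 2 = Real.exp (2*q) := by
    rw [pow_two, ← Real.exp_add, ← two_mul]
  have e4 : Real.exp (p+q) * |x| = 2 * (Real.exp p * |x|) * Real.exp q / 2 := by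
    rw [Real.exp_add]; ring
  rw [e1, e2] at h
  rw [e4]
  linarith

lemma expAMGM' (r p q x : ℝ) (hr : r = p + q) :
    |Real.exp r * x| ≤ (Real.exp (2*p) * x^2 + Real.exp (2*q)) / 2 := by
  rw [abs_mul, Real.abs_exp, hr]; exact expAMGM p q x

set_option maxHeartbeats 1000000 in
/-- Selection of the finite-energy solution: if `v` is in the general-solution form
with constants `c₁, c₂` and has finite weighted energy `∫₀^∞ e^{−t/ε}|v|² < ∞`,
then necessarily `c₂ = (1/Z)∫₀^∞ e^{−μ_ε s} f̂(s) ds`. -/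
theorem stmt17 (ε μ : ℝ) (hε : 0 < ε) (hpos : 1 / 2 ≤ 1 + 4 * ε * μ)
    (Z lam με : ℝ) (hZ : Z = Real.sqrt (1 + 4 * ε * μ))
    (hlam : lam = (1 - Z) / (2 * ε)) (hμε : με = (1 + Z) / (2 * ε))
    (f : ℝ → ℝ) (hmeas : Measurable f)
    (hf : ∫⁻ s in Set.Ioi (0 : ℝ),
        ENNReal.ofReal (Real.exp (-s / (2 * ε)) * f s ^ 2) < ⊤)
    (c₁ c₂ : ℝ) (v : ℝ → ℝ)
    (hv : ∀ t, v t =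
      Real.exp (lam * t) * (c₁ + (1 / Z) * ∫ s in (0 : ℝ)..t, Real.exp (-lam * s) * f s) +
        Real.exp (με * t) * (c₂ - (1 / Z) * ∫ s in (0 : ℝ)..t, Real.exp (-με * s) * f s))
    (hfin : ∫⁻ t in Set.Ioi (0 : ℝ),
        ENNReal.ofReal (Real.exp (-t / ε) * v t ^ 2) < ⊤) :
    c₂ = (1 / Z) * ∫ s in Set.Ioi (0 : ℝ), Real.exp (-με * s) * f s := by
  have hZpos : 0 < Z := by
    rw [hZ]; exact Real.sqrt_pos.mpr (by linarith)
  have hZhalf : 1/2 < Z := by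
    rw [hZ]; exact (Real.lt_sqrt (by norm_num)).mpr (by nlinarith)
  set α := (2*Z - 1)/(4*ε) with hα_def
  set k := Z/(2*ε) with hk_def
  have hαpos : 0 < α := div_pos (by linarith) (by linarith)
  have hkpos : 0 < k := div_pos hZpos (by linarith)
  have hαk : α < k := by
    rw [hα_def, hk_def, div_lt_div_iff₀ (by linarith) (by linarith)]
    nlinarith
  set g : ℝ → ℝ := fun s => Real.exp (-s/(2*ε)) * f s ^ 2 with hg_def
  have hg_meas : Measurable g :=
    ((measurable_id.neg.div_const _).exp).mul (hmeas.pow_const 2)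
  have hg_nonneg : ∀ s, 0 ≤ g s := fun s => by positivity
  have hg_int : IntegrableOn g (Ioi 0) := by
    refine ⟨hg_meas.aestronglyMeasurable, ?_⟩
    rw [hasFiniteIntegral_iff_ofReal (Filter.Eventually.of_forall fun s => hg_nonneg s)]
    exact hf
  set M := ∫ s in Ioi (0:ℝ), g s with hM_def
  have hM0 : 0 ≤ M := setIntegral_nonneg measurableSet_Ioi fun s _ => hg_nonneg s
  -- integrability of the `με` integrand on `Ioi 0`
  have hcval : 2*με - 1/(2*ε) = (1+2*Z)/(2*ε) := by rw [hμε]; field_simp; ring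
  have hc : (0:ℝ) < 2*με - 1/(2*ε) := by
    rw [hcval]; exact div_pos (by linarith) (by linarith)
  have hμint : IntegrableOn (fun s => Real.exp (-με*s) * f s) (Ioi 0) := by
    refine Integrable.mono'
      ((hg_int.add (exp_neg_integrableOn_Ioi 0 hc)).div_const 2)
      ((((measurable_id.const_mul (-με)).exp).mul hmeas).aestronglyMeasurable) (Filter.Eventually.of_forall fun s => ?_)
    calc ‖Real.exp (-με*s) * f s‖
        = |Real.exp (-με*s) * f s| := Real.norm_eq_abs _
      _ ≤ (Real.exp (2*(-s/(4*ε))) * f s^2 + Real.exp (2*(-με*s + s/(4*ε))))/2 :=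
          expAMGM' _ _ _ _ (by ring)
      _ = (g s + Real.exp (-(2*με - 1/(2*ε))*s))/2 := by
          rw [show 2*(-s/(4*ε)) = -s/(2*ε) by field_simp; ring,
            show 2*(-με*s + s/(4*ε)) = -(2*με - 1/(2*ε))*s by field_simp; ring]
  set L := ∫ s in Ioi (0:ℝ), Real.exp (-με*s) * f s with hL_def
  have hBlim : Filter.Tendsto (fun t : ℝ => ∫ s in (0:ℝ)..t, Real.exp (-με*s) * f s)
      Filter.atTop (nhds L) :=
    intervalIntegral_tendsto_integral_Ioi 0 hμint Filter.tendsto_id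
  -- growth bound for the `lam` primitive
  have hAbound : ∀ t : ℝ, 0 ≤ t →
      |∫ s in (0:ℝ)..t, Real.exp (-lam*s) * f s| ≤ Real.exp (α*t) * ((M + 1/(2*α))/2) := by
    intro t ht
    set B : ℝ → ℝ := fun s => (Real.exp (α*t) * g s + Real.exp (2*α*s - α*t))/2 with hB_def
    have hBint : IntervalIntegrable B volume 0 t := by
      apply IntervalIntegrable.div_const
      exact (((intervalIntegrable_iff_integrableOn_Ioc_of_le ht).mpr
        (hg_int.mono_set Ioc_subset_Ioi_self)).const_mul _).add
        (((by fun_prop : Continuous fun s : ℝ => Real.exp (2*α*s - α*t))).intervalIntegrable _ _)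
    have hgInt : IntervalIntegrable g volume 0 t :=
      (intervalIntegrable_iff_integrableOn_Ioc_of_le ht).mpr
        (hg_int.mono_set Ioc_subset_Ioi_self)
    have hptw : ∀ s : ℝ, ‖Real.exp (-lam*s) * f s‖ ≤ B s := by
      intro s
      calc ‖Real.exp (-lam*s) * f s‖
          = |Real.exp (-lam*s) * f s| := Real.norm_eq_abs _
        _ ≤ (Real.exp (2*((α*t - s/(2*ε))/2)) * f s^2
              + Real.exp (2*((2*α*s - α*t)/2)))/2 :=
            expAMGM' _ _ _ _ (by rw [hlam, hα_def]; field_simp; ring)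
        _ = B s := by
            rw [hB_def]
            rw [show (2:ℝ)*((α*t - s/(2*ε))/2) = α*t - s/(2*ε) by ring,
              show (2:ℝ)*((2*α*s - α*t)/2) = 2*α*s - α*t by ring]
            simp only [hg_def]
            rw [← mul_assoc, ← Real.exp_add]
            ring_nf
    have hstep : |∫ s in (0:ℝ)..t, Real.exp (-lam*s) * f s| ≤ |∫ s in (0:ℝ)..t, B s| := by
      have := intervalIntegral.norm_integral_le_abs_of_norm_le
        (f := fun s => Real.exp (-lam*s) * f s) (g := B)
        (ae_of_all _ hptw) hBint
      simpa using this
    have hBnn : 0 ≤ ∫ s in (0:ℝ)..t, B s := by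
      apply intervalIntegral.integral_nonneg ht
      intro s _
      have := hg_nonneg s
      have := Real.exp_pos (α*t)
      have := (Real.exp_pos (2*α*s - α*t)).le
      rw [hB_def]; positivity
    rw [abs_of_nonneg hBnn] at hstep
    refine hstep.trans ?_
    have h1 : ∫ s in (0:ℝ)..t, g s ≤ M := by
      rw [intervalIntegral.integral_of_le ht, hM_def]
      exact setIntegral_mono_set hg_int (ae_of_all _ hg_nonneg)
        (HasSubset.Subset.eventuallyLE Ioc_subset_Ioi_self)
    have h2 : ∫ s in (0:ℝ)..t, B s
        = (Real.exp (α*t) * (∫ s in (0:ℝ)..t, g s)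
          + ∫ s in (0:ℝ)..t, Real.exp (2*α*s - α*t))/2 := by
      rw [hB_def, intervalIntegral.integral_div, intervalIntegral.integral_add
        (hgInt.const_mul _) (((by fun_prop : Continuous fun s : ℝ => Real.exp (2*α*s - α*t))).intervalIntegrable _ _),
        intervalIntegral.integral_const_mul]
    have h3 : ∫ s in (0:ℝ)..t, Real.exp (2*α*s - α*t)
        = Real.exp (-(α*t)) * ∫ s in (0:ℝ)..t, Real.exp (2*α*s) := by
      rw [← intervalIntegral.integral_const_mul]
      apply intervalIntegral.integral_congr
      intro s _
      dsimp only
      rw [← Real.exp_add]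
      congr 1
      ring
    have h4 : ∫ s in (0:ℝ)..t, Real.exp (2*α*s)
        = (2*α)⁻¹ * (Real.exp (2*α*t) - 1) := by
      have h2α : (2*α : ℝ) ≠ 0 := by positivity
      rw [show (fun s : ℝ => Real.exp (2*α*s)) = fun s : ℝ => Real.exp ((2*α)*s) by
        funext s; ring_nf]
      rw [intervalIntegral.integral_comp_mul_left (fun u => Real.exp u) h2α]
      simp [integral_exp, smul_eq_mul, mul_zero, Real.exp_zero]
    have eid : Real.exp (-(α*t)) * Real.exp (2*α*t) = Real.exp (α*t) := by
      rw [← Real.exp_add]; ring_nf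
    have hIgnn : 0 ≤ ∫ s in (0:ℝ)..t, g s :=
      intervalIntegral.integral_nonneg ht fun s _ => hg_nonneg s
    rw [h2, h3, h4]
    have hinv : (0:ℝ) < (2*α)⁻¹ := by positivity
    have he1 : (0:ℝ) < Real.exp (α*t) := Real.exp_pos _
    have he2 : (0:ℝ) < Real.exp (-(α*t)) := Real.exp_pos _
    have expand : Real.exp (-(α*t)) * ((2*α)⁻¹ * (Real.exp (2*α*t) - 1))
        = (2*α)⁻¹ * Real.exp (α*t) - (2*α)⁻¹ * Real.exp (-(α*t)) := by
      rw [← eid]; ring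
    rw [one_div]
    nlinarith [mul_le_mul_of_nonneg_left h1 he1.le, mul_pos hinv he2, expand]
  -- the `A` part decays
  have hexp0 : ∀ c : ℝ, 0 < c →
      Filter.Tendsto (fun t : ℝ => Real.exp (-(c*t))) Filter.atTop (nhds 0) := by
    intro c hcpos
    exact Real.tendsto_exp_neg_atTop_nhds_zero.comp
      (Filter.Tendsto.const_mul_atTop hcpos Filter.tendsto_id)
  have hA0 : Filter.Tendsto (fun t : ℝ => Real.exp (-(k*t)) *
      (c₁ + (1/Z) * ∫ s in (0:ℝ)..t, Real.exp (-lam*s) * f s)) Filter.atTop (nhds 0) := by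
    apply squeeze_zero_norm' (a := fun t => Real.exp (-(k*t)) * |c₁|
      + (1/Z) * ((M + 1/(2*α))/2) * Real.exp (-((k-α)*t)))
    · filter_upwards [Filter.eventually_ge_atTop (0:ℝ)] with t ht
      have hb := hAbound t ht
      have hZinv : (0:ℝ) < 1/Z := by positivity
      calc ‖Real.exp (-(k*t)) * (c₁ + (1/Z) * ∫ s in (0:ℝ)..t, Real.exp (-lam*s) * f s)‖
          = Real.exp (-(k*t)) * |c₁ + (1/Z) * ∫ s in (0:ℝ)..t, Real.exp (-lam*s) * f s| := by
            rw [Real.norm_eq_abs, abs_mul, Real.abs_exp]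
        _ ≤ Real.exp (-(k*t)) * (|c₁| + (1/Z) * (Real.exp (α*t) * ((M + 1/(2*α))/2))) := by
            apply mul_le_mul_of_nonneg_left _ (Real.exp_pos _).le
            refine (abs_add_le _ _).trans ?_
            gcongr
            rw [abs_mul, abs_of_pos hZinv]
            exact mul_le_mul_of_nonneg_left hb hZinv.le
        _ = Real.exp (-(k*t)) * |c₁|
            + (1/Z) * ((M + 1/(2*α))/2) * (Real.exp (-(k*t)) * Real.exp (α*t)) := by ring
        _ = Real.exp (-(k*t)) * |c₁|
            + (1/Z) * ((M + 1/(2*α))/2) * Real.exp (-((k-α)*t)) := by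
            rw [← Real.exp_add]; ring_nf
    · have t1 := (hexp0 k hkpos).mul_const |c₁|
      have t2 := ((hexp0 (k-α) (by linarith)).const_mul ((1/Z) * ((M + 1/(2*α))/2)))
      have := t1.add t2
      simpa using this
  -- identity for the rescaled solution
  have hwid : ∀ t : ℝ, Real.exp (-t/(2*ε)) * v t
      = Real.exp (-(k*t)) * (c₁ + (1/Z) * ∫ s in (0:ℝ)..t, Real.exp (-lam*s) * f s)
      + Real.exp (k*t) * (c₂ - (1/Z) * ∫ s in (0:ℝ)..t, Real.exp (-με*s) * f s) := by
    intro t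
    have e1 : Real.exp (-t/(2*ε)) * Real.exp (lam*t) = Real.exp (-(k*t)) := by
      rw [← Real.exp_add]; congr 1; rw [hlam, hk_def]; field_simp; ring
    have e2 : Real.exp (-t/(2*ε)) * Real.exp (με*t) = Real.exp (k*t) := by
      rw [← Real.exp_add]; congr 1; rw [hμε, hk_def]; field_simp; ring
    rw [hv t, mul_add, ← mul_assoc, ← mul_assoc, e1, e2]
  by_contra hne
  have hδne : ¬(c₂ - (1/Z)*L = 0) := fun h => hne (by linarith)
  have habs : 0 < |c₂ - (1/Z)*L| := abs_pos.mpr hδne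
  have hBt : Filter.Tendsto
      (fun t : ℝ => |c₂ - (1/Z) * ∫ s in (0:ℝ)..t, Real.exp (-με*s) * f s|)
      Filter.atTop (nhds (|c₂ - (1/Z)*L|)) :=
    (tendsto_const_nhds.sub (hBlim.const_mul (1/Z))).abs
  have hBev : ∀ᶠ t in Filter.atTop,
      |c₂ - (1/Z)*L|/2 ≤ |c₂ - (1/Z) * ∫ s in (0:ℝ)..t, Real.exp (-με*s) * f s| :=
    hBt.eventually (eventually_ge_nhds (by linarith))
  have hAev : ∀ᶠ t in Filter.atTop,
      ‖Real.exp (-(k*t)) * (c₁ + (1/Z) * ∫ s in (0:ℝ)..t, Real.exp (-lam*s) * f s)‖ < 1 :=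
    NormedAddCommGroup.tendsto_nhds_zero.mp hA0 1 one_pos
  have hWtop : Filter.Tendsto (fun t : ℝ => |Real.exp (-t/(2*ε)) * v t|)
      Filter.atTop Filter.atTop := by
    refine Filter.tendsto_atTop_mono' Filter.atTop
      (f₁ := fun t : ℝ => (|c₂ - (1/Z)*L|/2) * Real.exp (k*t) - 1) ?_ ?_
    · filter_upwards [hBev, hAev] with t hB hA
      set X := Real.exp (-(k*t)) * (c₁ + (1/Z) * ∫ s in (0:ℝ)..t, Real.exp (-lam*s) * f s)
        with hX
      set Y := Real.exp (k*t) * (c₂ - (1/Z) * ∫ s in (0:ℝ)..t, Real.exp (-με*s) * f s)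
        with hY
      have hXY : |Real.exp (-t/(2*ε)) * v t| = |X + Y| := by rw [hwid t]
      have tri : |Y| ≤ |X + Y| + |X| := by
        have h0 : X + Y + -X = Y := by ring
        calc |Y| = |X + Y + -X| := by rw [h0]
          _ ≤ |X + Y| + |-X| := abs_add_le _ _
          _ = |X + Y| + |X| := by rw [abs_neg]
      have hYval : |Y| = Real.exp (k*t)
          * |c₂ - (1/Z) * ∫ s in (0:ℝ)..t, Real.exp (-με*s) * f s| := by
        rw [hY, abs_mul, Real.abs_exp]
      have hYlb : (|c₂ - (1/Z)*L|/2) * Real.exp (k*t) ≤ |Y| := by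
        rw [hYval, mul_comm]
        exact mul_le_mul_of_nonneg_left hB (Real.exp_pos _).le
      have hXub : |X| < 1 := by rwa [← Real.norm_eq_abs]
      rw [hXY]
      linarith
    · have h1 : Filter.Tendsto (fun t : ℝ => k*t) Filter.atTop Filter.atTop :=
        Filter.Tendsto.const_mul_atTop hkpos Filter.tendsto_id
      have h2 : Filter.Tendsto (fun t : ℝ => Real.exp (k*t)) Filter.atTop Filter.atTop :=
        Real.tendsto_exp_atTop.comp h1
      have h3 := Filter.Tendsto.const_mul_atTop (show (0:ℝ) < |c₂ - (1/Z)*L|/2 by linarith) h2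
      simpa [sub_eq_add_neg] using Filter.tendsto_atTop_add_const_right _ (-1) h3
  obtain ⟨T, hT⟩ := Filter.eventually_atTop.mp (hWtop.eventually_ge_atTop 1)
  set T' := max T 1 with hT'_def
  have hT'pos : (0:ℝ) < T' := lt_of_lt_of_le one_pos (le_max_right _ _)
  have hkey : ∀ t ∈ Ioi T', (1:ENNReal) ≤ ENNReal.ofReal (Real.exp (-t/ε) * v t ^ 2) := by
    intro t htT
    have h1 : 1 ≤ |Real.exp (-t/(2*ε)) * v t| :=
      hT t (le_trans (le_max_left _ _) (le_of_lt htT))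
    have h2 : Real.exp (-t/ε) * v t ^ 2 = (Real.exp (-t/(2*ε)) * v t)^2 := by
      rw [mul_pow, pow_two (Real.exp (-t/(2*ε))), ← Real.exp_add,
        show -t/(2*ε) + -t/(2*ε) = -t/ε by field_simp; ring]
    rw [h2, show (1:ENNReal) = ENNReal.ofReal 1 from ENNReal.ofReal_one.symm]
    apply ENNReal.ofReal_le_ofReal
    calc (1:ℝ) = 1^2 := by norm_num
      _ ≤ |Real.exp (-t/(2*ε)) * v t|^2 := pow_le_pow_left₀ (by norm_num) h1 2
      _ = (Real.exp (-t/(2*ε)) * v t)^2 := sq_abs _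
  have htop : (⊤:ENNReal) ≤ ∫⁻ t in Ioi (0:ℝ),
      ENNReal.ofReal (Real.exp (-t/ε) * v t ^ 2) := by
    calc (⊤:ENNReal) = volume (Ioi T') := Real.volume_Ioi.symm
      _ = ∫⁻ _ in Ioi T', (1:ENNReal) := (setLIntegral_one _).symm
      _ ≤ ∫⁻ t in Ioi T', ENNReal.ofReal (Real.exp (-t/ε) * v t ^ 2) :=
          setLIntegral_mono' measurableSet_Ioi hkey
      _ ≤ ∫⁻ t in Ioi (0:ℝ), ENNReal.ofReal (Real.exp (-t/ε) * v t ^ 2) :=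
          lintegral_mono_set (Ioi_subset_Ioi hT'pos.le)
  rw [top_le_iff.mp htop] at hfin
  exact absurd hfin (lt_irrefl _)
end

section
/- Let K ≤ 0, T > 0, ε > 0 with 4ε|K| < 1/2, and let μ ≥ K with Z := √(1+4εμ), λ_ε := (1−Z)/(2ε). Then sup_{t∈[0,T]} ((1+|μ|)/Z²) ∫₀^t e^{2λ_ε(t−s)} ds ≤ 2(1−K)(T+1) e^{−4KT}. -/
open MeasureTheory Set

lemma exp_int (c t : ℝ) (hc : c ≠ 0) :
    ∫ s in (0:ℝ)..t, Real.exp (c * (t - s)) = (Real.exp (c * t) - 1) / c := by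
  have h1 : (∫ s in (0:ℝ)..t, Real.exp (c * (t - s)))
      = ∫ x in (t - t)..(t - 0), Real.exp (c * x) :=
    (intervalIntegral.integral_comp_sub_left (fun x => Real.exp (c * x)) t).symm ▸ rfl
  rw [h1]
  simp only [sub_self, sub_zero]
  rw [intervalIntegral.integral_comp_mul_left (fun x => Real.exp x) hc]
  rw [mul_zero, integral_exp, Real.exp_zero, smul_eq_mul]
  field_simp

set_option maxHeartbeats 2000000 in
/-- Dominating kernel estimate: for `K ≤ 0`, `T > 0`, `4ε|K| < 1/2`, `μ ≥ K`,
`Z = √(1+4εμ)` and `λ_ε = (1−Z)/(2ε)`,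
`sup_{t∈[0,T]} ((1+|μ|)/Z²)∫₀^t e^{2λ_ε(t−s)} ds ≤ 2(1−K)(T+1)e^{−4KT}`. -/
theorem stmt19 (K T ε μ : ℝ) (hK : K ≤ 0) (hT : 0 < T) (hε : 0 < ε)
    (hsmall : 4 * ε * |K| < 1 / 2) (hμ : K ≤ μ)
    (Z lam : ℝ) (hZ : Z = Real.sqrt (1 + 4 * ε * μ)) (hlam : lam = (1 - Z) / (2 * ε)) :
    ∀ t ∈ Set.Icc (0 : ℝ) T,
      ((1 + |μ|) / Z ^ 2) * ∫ s in (0 : ℝ)..t, Real.exp (2 * lam * (t - s)) ≤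
        2 * (1 - K) * (T + 1) * Real.exp (-4 * K * T) := by
  intro t ht
  obtain ⟨ht0, htT⟩ := ht
  have habsK : |K| = -K := abs_of_nonpos hK
  rw [habsK] at hsmall
  have hpos : (0:ℝ) < 1 + 4 * ε * μ := by nlinarith
  have hZ2 : Z ^ 2 = 1 + 4 * ε * μ := by
    rw [hZ, Real.sq_sqrt hpos.le]
  have hZpos : 0 < Z := by rw [hZ]; exact Real.sqrt_pos.2 hpos
  have hZ2half : (1:ℝ)/2 ≤ Z ^ 2 := by nlinarith
  have hexpT : (1:ℝ) ≤ Real.exp (-4 * K * T) := by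
    rw [← Real.exp_zero]
    exact Real.exp_le_exp.2 (by nlinarith)
  rcases le_or_gt μ 0 with hμ0 | hμ0
  · -- case μ ≤ 0 : Z ≤ 1, 0 ≤ lam ≤ -2K
    have habsμ : |μ| = -μ := abs_of_nonpos hμ0
    have hZle1 : Z ≤ 1 := by nlinarith
    have hlamnn : 0 ≤ lam := by
      rw [hlam]
      exact div_nonneg (by linarith) (by positivity)
    have hlamle : lam ≤ -2 * K := by
      -- 1 - Z ≤ -4εK  ⟺  1 + 4εK ≤ Z, and Z² = 1+4εμ ≥ 1+4εK, with 1+4εK ≤ 1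
      have h1 : (1 + 4*ε*K) ≤ Z := by nlinarith
      rw [hlam, div_le_iff₀ (by positivity)]
      nlinarith
    -- integrand ≤ exp(-4KT)
    have hint : (∫ s in (0:ℝ)..t, Real.exp (2 * lam * (t - s)))
        ≤ ∫ s in (0:ℝ)..t, Real.exp (-4 * K * T) := by
      apply intervalIntegral.integral_mono_on ht0
      · exact (Continuous.intervalIntegrable (by continuity) _ _)
      · exact intervalIntegrable_const
      · intro s hs
        apply Real.exp_le_exp.2
        have hs1 : 0 ≤ s := hs.1
        have hs2 : s ≤ t := hs.2
        nlinarith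
    rw [intervalIntegral.integral_const, smul_eq_mul, sub_zero] at hint
    have hintnn : 0 ≤ ∫ s in (0:ℝ)..t, Real.exp (2 * lam * (t - s)) := by
      apply intervalIntegral.integral_nonneg ht0
      intro s _; positivity
    have hcoef : (1 + |μ|) / Z ^ 2 ≤ 2 * (1 - K) := by
      rw [div_le_iff₀ (by positivity)]
      rw [habsμ]; nlinarith
    have hcoefnn : 0 ≤ (1 + |μ|) / Z ^ 2 := by positivity
    have h0 : (0:ℝ) ≤ 2 * (1 - K) := by linarith
    calc ((1 + |μ|) / Z ^ 2) * ∫ s in (0:ℝ)..t, Real.exp (2 * lam * (t - s))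
        ≤ (2 * (1 - K)) * (t * Real.exp (-4 * K * T)) := mul_le_mul hcoef hint hintnn h0
      _ ≤ (2 * (1 - K)) * ((T + 1) * Real.exp (-4 * K * T)) := by
          apply mul_le_mul_of_nonneg_left _ h0
          exact mul_le_mul_of_nonneg_right (by linarith) (Real.exp_pos _).le
      _ = 2 * (1 - K) * (T + 1) * Real.exp (-4 * K * T) := by ring
  · -- case μ > 0 : Z > 1, lam < 0
    have habsμ : |μ| = μ := abs_of_pos hμ0
    have hZgt1 : 1 < Z := by nlinarith
    have hlamneg : lam < 0 := by
      rw [hlam]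
      apply div_neg_of_neg_of_pos (by linarith) (by positivity)
    have hc : (2 * lam) ≠ 0 := by intro h; nlinarith
    rw [exp_int _ _ hc]
    obtain ⟨E, hEdef⟩ : ∃ E, E = Real.exp (2 * lam * t) := ⟨_, rfl⟩
    rw [← hEdef]
    have hE1 : E ≤ 1 := by
      rw [hEdef, ← Real.exp_zero]
      exact Real.exp_le_exp.2 (mul_nonpos_of_nonpos_of_nonneg (by linarith) ht0)
    have hEge : 1 + 2 * lam * t ≤ E := by
      rw [hEdef]; linarith [Real.add_one_le_exp (2 * lam * t)]
    have hlam2 : 0 < -(2 * lam) := by linarith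
    have hE0 : 0 < E := hEdef ▸ Real.exp_pos _
    have h : ((1 + |μ|) / Z ^ 2) * ((E - 1) / (2 * lam)) ≤ T + 1/2 := by
      rw [habsμ]
      have heq : (E - 1) / (2 * lam) = (1 - E) / (-(2*lam)) := by
        field_simp; ring
      rw [heq]
      have h1 : (1 - E) ≤ -(2 * lam) * t := by linarith
      have h2 : 0 ≤ 1 - E := by linarith
      have hml : -(2*lam) = (Z - 1) / ε := by rw [hlam]; field_simp; ring
      have h3 : 2 * μ ≤ Z ^ 2 * (-(2*lam)) := by
        rw [hml, ← mul_div_assoc, le_div_iff₀ hε]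
        nlinarith [sq_nonneg (Z - 1), sq_nonneg Z]
      have hd : 0 < Z ^ 2 * (-(2*lam)) := by positivity
      have expand : ((1 + μ) / Z ^ 2) * ((1 - E) / (-(2*lam)))
          = (1 - E) / (Z^2 * (-(2*lam))) + μ * (1 - E) / (Z^2 * (-(2*lam))) := by
        field_simp; ring
      rw [expand]
      have t1 : (1 - E) / (Z^2 * (-(2*lam))) ≤ T := by
        rw [div_le_iff₀ hd]
        have hz1 : (1:ℝ) ≤ Z ^ 2 := by nlinarith
        nlinarith
      have t2 : μ * (1 - E) / (Z^2 * (-(2*lam))) ≤ 1/2 := by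
        rw [div_le_iff₀ hd]
        nlinarith [mul_le_mul_of_nonneg_left (show 1 - E ≤ 1 by linarith) hμ0.le]
      linarith
    have hrhs : T + 1/2 ≤ 2 * (1 - K) * (T + 1) * Real.exp (-4 * K * T) := by
      have hB : 2*(T+1) ≤ 2*(1-K)*(T+1) := by nlinarith
      have hC : 2*(1-K)*(T+1) ≤ 2*(1-K)*(T+1) * Real.exp (-4 * K * T) :=
        le_mul_of_one_le_right (by nlinarith) hexpT
      linarith
    linarith
end
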